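/- arXiv:1602.03125 — 5 statements merged into one kernel-verified Lean document; each statement's English description precedes it below -/
import Mathlib

section
/- Let Γ be a smooth solution of the Yang–Mills flow on ℝⁿ × [t₁,t₂] and let φ ∈ C¹_c(ℝⁿ, [0,∞)). Then (1/4)∫_{ℝⁿ} (|F_{t₁}(x)|² − |F_{t₂}(x)|²) φ(x)² dx = ∫_{t₁}^{t₂} ∫_{ℝⁿ} ( |∂_tΓ_t(x)|² φ(x)² + 2 φ(x) Σ_{j=1}^n ⟨ Σ_{i=1}^n ∂_iφ(x) (F_t)_{ij}(x), (∂_tΓ_t)_j(x) ⟩ ) dx dt, where |∂_tΓ_t|² = Σ_j |(∂_tΓ_t)_j|² and |F_t|² = Σ_{i,j=1}^n |(F_t)_{ij}|². -/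
open MeasureTheory Filter Set
open scoped ContDiff ENNReal

noncomputable section

abbrev Mat (k : ℕ) := Fin k → Fin k → ℝ

def mmul {k : ℕ} (A B : Mat k) : Mat k := fun i j => ∑ l, A i l * B l j

def mbra {k : ℕ} (A B : Mat k) : Mat k := mmul A B - mmul B A

def minner {k : ℕ} (A B : Mat k) : ℝ := ∑ i, ∑ j, A i j * B i j

def msq {k : ℕ} (A : Mat k) : ℝ := minner A A

abbrev Conn (n k : ℕ) := ℝ → (Fin n → ℝ) → Fin n → Mat k

/-- Spatial partial derivative in the `i`-th coordinate direction. -/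
def pd {n : ℕ} {E : Type*} [NormedAddCommGroup E] [NormedSpace ℝ E]
    (f : (Fin n → ℝ) → E) (x : Fin n → ℝ) (i : Fin n) : E :=
  fderiv ℝ f x (Pi.single i 1)

/-- Time derivative of a time-dependent connection. -/
def tderiv {n k : ℕ} (Γ : Conn n k) (t : ℝ) (x : Fin n → ℝ) (j : Fin n) : Mat k :=
  deriv (fun s => Γ s x j) t

/-- Curvature `(F_t)_{ij} = ∂_i(Γ_t)_j − ∂_j(Γ_t)_i + [(Γ_t)_i,(Γ_t)_j]`. -/
def curv {n k : ℕ} (Γ : Conn n k) (t : ℝ) (x : Fin n → ℝ) (i j : Fin n) : Mat k :=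
  pd (fun y => Γ t y j) x i - pd (fun y => Γ t y i) x j + mbra (Γ t x i) (Γ t x j)

/-- Covariant derivative `∇_i om = ∂_i om + [(Γ_t)_i, om]`. -/
def covD {n k : ℕ} (Γ : Conn n k) (t : ℝ) (om : (Fin n → ℝ) → Mat k)
    (x : Fin n → ℝ) (i : Fin n) : Mat k :=
  pd om x i + mbra (Γ t x i) (om x)

/-- A smooth time-dependent connection: jointly smooth in `(t,x)`, with values in the
skew-symmetric matrices `𝔤`. -/
def IsSmoothConn {n k : ℕ} (Γ : Conn n k) : Prop :=
  ContDiff ℝ ∞ (fun p : ℝ × (Fin n → ℝ) => Γ p.1 p.2)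
    ∧ ∀ t x i a b, Γ t x i b a = - (Γ t x i a b)

/-- The Yang–Mills flow equation `∂_t(Γ_t)_j = Σᵢ ∇_i(F_t)_{ij}` on a time interval `I`. -/
def IsYMFlowOn {n k : ℕ} (Γ : Conn n k) (I : Set ℝ) : Prop :=
  ∀ t ∈ I, ∀ x j, tderiv Γ t x j = ∑ i, covD Γ t (fun y => curv Γ t y i j) x i

/-- `|F_t|²(x) = Σ_{i,j} |(F_t)_{ij}(x)|²`. -/
def normF2 {n k : ℕ} (Γ : Conn n k) (t : ℝ) (x : Fin n → ℝ) : ℝ :=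
  ∑ i, ∑ j, msq (curv Γ t x i j)

/-- The backwards heat kernel `G_{z₀}(x,t)` based at `z₀ = (x₀,t₀)`. -/
def gauss {n : ℕ} (z0 : (Fin n → ℝ) × ℝ) (x : Fin n → ℝ) (t : ℝ) : ℝ :=
  (4 * Real.pi * (z0.2 - t)) ^ (-(n : ℝ) / 2) *
    Real.exp (-(∑ i, (x i - z0.1 i) ^ 2) / (4 * (z0.2 - t)))

/-- The entropy `Φ_{z₀}(R;Γ)`. -/
def Phi {n k : ℕ} (Γ : Conn n k) (z0 : (Fin n → ℝ) × ℝ) (R : ℝ) : ℝ :=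
  R ^ 4 / 2 * ∫ x : Fin n → ℝ, normF2 Γ (z0.2 - R ^ 2) x * gauss z0 x (z0.2 - R ^ 2)

/-- The entropy `Ψ_{z₀}(R;Γ)`. -/
def Psi {n k : ℕ} (Γ : Conn n k) (z0 : (Fin n → ℝ) × ℝ) (R : ℝ) : ℝ :=
  R ^ 2 / 2 * ∫ t in Icc (z0.2 - 4 * R ^ 2) (z0.2 - R ^ 2),
    ∫ x : Fin n → ℝ, normF2 Γ t x * gauss z0 x t

/-- The parabolically rescaled connection `Γ^{λ,z₀}`. -/
def rescale {n k : ℕ} (Γ : Conn n k) (z0 : (Fin n → ℝ) × ℝ) (lam : ℝ) : Conn n k :=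
  fun t x i => lam • Γ (lam ^ 2 * t + z0.2) (fun m => lam * x m + z0.1 m) i

/-- Spatial support of `Γ_t` contained in `K` for all `t`. -/
def SuppIn {n k : ℕ} (Γ : Conn n k) (K : Set (Fin n → ℝ)) : Prop :=
  ∀ t x, x ∉ K → Γ t x = 0

section MatAlgebra
variable {k : ℕ}

lemma minner_comm (A B : Mat k) : minner A B = minner B A := by
  unfold minner; congr 1; ext i; congr 1; ext j; ring

lemma minner_add_left (A B C : Mat k) : minner (A + B) C = minner A C + minner B C := by
  unfold minner; rw [← Finset.sum_add_distrib]; congr 1; ext i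
  rw [← Finset.sum_add_distrib]; congr 1; ext j
  simp [add_mul]

lemma minner_neg_left (A B : Mat k) : minner (-A) B = - minner A B := by
  unfold minner; simp

lemma minner_sub_left (A B C : Mat k) : minner (A - B) C = minner A C - minner B C := by
  rw [sub_eq_add_neg, minner_add_left, minner_neg_left]; ring

lemma minner_smul_left (c : ℝ) (A B : Mat k) : minner (c • A) B = c * minner A B := by
  unfold minner; rw [Finset.mul_sum]; congr 1; ext i; rw [Finset.mul_sum]; congr 1; ext j
  simp [mul_assoc]

lemma minner_sum_left {ι : Type*} (s : Finset ι) (f : ι → Mat k) (B : Mat k) :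
    minner (∑ i ∈ s, f i) B = ∑ i ∈ s, minner (f i) B := by
  classical
  induction s using Finset.induction with
  | empty => simp [minner]
  | insert a s h ih => rw [Finset.sum_insert h, Finset.sum_insert h, minner_add_left, ih]

lemma mbra_antisymm (A B : Mat k) : mbra A B = - mbra B A := by
  unfold mbra; abel

/-- skew-adjointness of `ad A` for skew-symmetric `A`. -/
lemma minner_mbra_left_skew {A : Mat k} (hA : ∀ a b, A b a = - A a b) (X Y : Mat k) :
    minner (mbra A X) Y = - minner X (mbra A Y) := by
  have h1 : minner (mmul A X) Y = - minner X (mmul A Y) := by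
    unfold minner mmul
    calc (∑ i, ∑ j, (∑ l, A i l * X l j) * Y i j)
        = ∑ i, ∑ j, ∑ l, A i l * X l j * Y i j := by simp [Finset.sum_mul]
      _ = ∑ i, ∑ l, ∑ j, A i l * X l j * Y i j :=
          Finset.sum_congr rfl fun i _ => Finset.sum_comm
      _ = ∑ l, ∑ i, ∑ j, A i l * X l j * Y i j := Finset.sum_comm
      _ = ∑ l, ∑ j, ∑ i, A i l * X l j * Y i j :=
          Finset.sum_congr rfl fun l _ => Finset.sum_comm
      _ = -∑ l, ∑ j, X l j * ∑ i, A l i * Y i j := by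
          rw [← Finset.sum_neg_distrib]
          refine Finset.sum_congr rfl fun l _ => ?_
          rw [← Finset.sum_neg_distrib]
          refine Finset.sum_congr rfl fun j _ => ?_
          rw [Finset.mul_sum, ← Finset.sum_neg_distrib]
          refine Finset.sum_congr rfl fun i _ => ?_
          rw [hA l i]; ring
  have h2 : minner (mmul X A) Y = - minner X (mmul Y A) := by
    unfold minner mmul
    calc (∑ i, ∑ j, (∑ l, X i l * A l j) * Y i j)
        = ∑ i, ∑ j, ∑ l, X i l * A l j * Y i j := by simp [Finset.sum_mul]
      _ = ∑ i, ∑ l, ∑ j, X i l * A l j * Y i j :=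
          Finset.sum_congr rfl fun i _ => Finset.sum_comm
      _ = -∑ i, ∑ l, X i l * ∑ j, Y i j * A j l := by
          rw [← Finset.sum_neg_distrib]
          refine Finset.sum_congr rfl fun i _ => ?_
          rw [← Finset.sum_neg_distrib]
          refine Finset.sum_congr rfl fun l _ => ?_
          rw [Finset.mul_sum, ← Finset.sum_neg_distrib]
          refine Finset.sum_congr rfl fun j _ => ?_
          rw [hA j l]; ring
  unfold mbra
  rw [show mmul A X - mmul X A = mmul A X + -(mmul X A) by abel]
  rw [minner_add_left, minner_neg_left, h1, h2]
  have h3 : minner X (mmul A Y - mmul Y A) = minner X (mmul A Y) - minner X (mmul Y A) := by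
    rw [minner_comm, minner_sub_left, minner_comm (mmul A Y) X, minner_comm (mmul Y A) X]
  rw [h3]; ring

end MatAlgebra
section PdCalc
variable {n k : ℕ} {x : Fin n → ℝ} {i : Fin n} {t : ℝ}

lemma matEntry_diff {f : (Fin n → ℝ) → Mat k} (hf : DifferentiableAt ℝ f x) (a b : Fin k) :
    DifferentiableAt ℝ (fun y => f y a b) x :=
  differentiableAt_pi.mp (differentiableAt_pi.mp hf a) b

lemma pd_matEntry {f : (Fin n → ℝ) → Mat k} (hf : DifferentiableAt ℝ f x) (a b : Fin k) :
    pd (fun y => f y a b) x i = pd f x i a b := by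
  have h1 := (ContinuousLinearMap.proj (R := ℝ) (φ := fun _ : Fin k => Fin k → ℝ)
    a).hasFDerivAt.comp x hf.hasFDerivAt
  have h2 := (ContinuousLinearMap.proj (R := ℝ) (φ := fun _ : Fin k => ℝ)
    b).hasFDerivAt.comp x h1
  have h3 : HasFDerivAt (fun y => f y a b)
      ((ContinuousLinearMap.proj b).comp ((ContinuousLinearMap.proj a).comp (fderiv ℝ f x))) x := h2
  simp [pd, h3.fderiv]

lemma pd_mul {f g : (Fin n → ℝ) → ℝ} (hf : DifferentiableAt ℝ f x) (hg : DifferentiableAt ℝ g x) :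
    pd (fun y => f y * g y) x i = pd f x i * g x + f x * pd g x i := by
  unfold pd
  rw [fderiv_fun_mul hf hg]
  simp only [ContinuousLinearMap.add_apply, ContinuousLinearMap.smul_apply, smul_eq_mul]
  ring

lemma pd_finset_sum {ι : Type*} {E : Type*} [NormedAddCommGroup E] [NormedSpace ℝ E]
    (s : Finset ι) {f : ι → (Fin n → ℝ) → E}
    (hf : ∀ j ∈ s, DifferentiableAt ℝ (f j) x) :
    pd (fun y => ∑ j ∈ s, f j y) x i = ∑ j ∈ s, pd (f j) x i := by
  unfold pd
  rw [fderiv_fun_sum hf]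
  simp

lemma minner_diff {f g : (Fin n → ℝ) → Mat k} (hf : DifferentiableAt ℝ f x)
    (hg : DifferentiableAt ℝ g x) :
    DifferentiableAt ℝ (fun y => minner (f y) (g y)) x := by
  apply DifferentiableAt.fun_sum; intro a _
  apply DifferentiableAt.fun_sum; intro b _
  exact (matEntry_diff hf a b).fun_mul (matEntry_diff hg a b)

lemma pd_minner {f g : (Fin n → ℝ) → Mat k} (hf : DifferentiableAt ℝ f x)
    (hg : DifferentiableAt ℝ g x) :
    pd (fun y => minner (f y) (g y)) x i
      = minner (pd f x i) (g x) + minner (f x) (pd g x i) := by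
  have e1 : (fun y => minner (f y) (g y)) = fun y => ∑ a, ∑ b, f y a b * g y a b := rfl
  rw [e1, pd_finset_sum _ (fun a _ => by
    exact DifferentiableAt.fun_sum fun b _ => (matEntry_diff hf a b).fun_mul (matEntry_diff hg a b))]
  have e2 : ∀ a : Fin k, pd (fun y => ∑ b, f y a b * g y a b) x i
      = ∑ b, (pd f x i a b * g x a b + f x a b * pd g x i a b) := by
    intro a
    rw [pd_finset_sum _ (fun b _ => (matEntry_diff hf a b).fun_mul (matEntry_diff hg a b))]
    refine Finset.sum_congr rfl fun b _ => ?_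
    rw [pd_mul (matEntry_diff hf a b) (matEntry_diff hg a b),
      pd_matEntry hf a b, pd_matEntry hg a b]
  simp only [e2]
  unfold minner
  rw [← Finset.sum_add_distrib]
  exact Finset.sum_congr rfl fun a _ => by rw [← Finset.sum_add_distrib]

lemma hasDerivAt_mmul {A B : ℝ → Mat k} {A' B' : Mat k} (hA : HasDerivAt A A' t)
    (hB : HasDerivAt B B' t) :
    HasDerivAt (fun s => mmul (A s) (B s)) (mmul A' (B t) + mmul (A t) B') t := by
  rw [hasDerivAt_pi]; intro a; rw [hasDerivAt_pi]; intro b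
  have hcomp : ∀ s, mmul (A s) (B s) a b = ∑ l, A s a l * B s l b := fun s => rfl
  simp only [hcomp]
  have hval : (mmul A' (B t) + mmul (A t) B') a b
      = ∑ l, (A' a l * B t l b + A t a l * B' l b) := by
    simp [mmul, Finset.sum_add_distrib]
  rw [hval]
  apply HasDerivAt.fun_sum
  intro l _
  exact ((hasDerivAt_pi.mp (hasDerivAt_pi.mp hA a) l).fun_mul
    (hasDerivAt_pi.mp (hasDerivAt_pi.mp hB l) b))

lemma hasDerivAt_mbra {A B : ℝ → Mat k} {A' B' : Mat k} (hA : HasDerivAt A A' t)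
    (hB : HasDerivAt B B' t) :
    HasDerivAt (fun s => mbra (A s) (B s)) (mbra A' (B t) + mbra (A t) B') t := by
  have h := (hasDerivAt_mmul hA hB).sub (hasDerivAt_mmul hB hA)
  have e : mbra A' (B t) + mbra (A t) B'
      = (mmul A' (B t) + mmul (A t) B') - (mmul B' (A t) + mmul (B t) A') := by
    unfold mbra; abel
  rw [e]
  exact h

lemma mmul_diff {f g : (Fin n → ℝ) → Mat k} (hf : DifferentiableAt ℝ f x)
    (hg : DifferentiableAt ℝ g x) :
    DifferentiableAt ℝ (fun y => mmul (f y) (g y)) x := by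
  rw [differentiableAt_pi]; intro a; rw [differentiableAt_pi]; intro b
  exact DifferentiableAt.fun_sum fun l _ => (matEntry_diff hf a l).fun_mul (matEntry_diff hg l b)

lemma mbra_diff {f g : (Fin n → ℝ) → Mat k} (hf : DifferentiableAt ℝ f x)
    (hg : DifferentiableAt ℝ g x) :
    DifferentiableAt ℝ (fun y => mbra (f y) (g y)) x :=
  (mmul_diff hf hg).sub (mmul_diff hg hf)

-- continuity helpers
variable {α : Type*} [TopologicalSpace α]

lemma matEntry_cont {f : α → Mat k} (hf : Continuous f) (a b : Fin k) :
    Continuous fun p => f p a b :=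
  (continuous_apply b).comp ((continuous_apply a).comp hf)

lemma minner_cont {f g : α → Mat k} (hf : Continuous f) (hg : Continuous g) :
    Continuous fun p => minner (f p) (g p) := by
  have : (fun p => minner (f p) (g p)) = fun p => ∑ a, ∑ b, f p a b * g p a b := rfl
  rw [this]
  exact continuous_finset_sum _ fun a _ => continuous_finset_sum _ fun b _ =>
    (matEntry_cont hf a b).mul (matEntry_cont hg a b)

lemma mmul_cont {f g : α → Mat k} (hf : Continuous f) (hg : Continuous g) :
    Continuous fun p => mmul (f p) (g p) := by
  apply continuous_pi; intro a; apply continuous_pi; intro b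
  exact continuous_finset_sum _ fun l _ => (matEntry_cont hf a l).mul (matEntry_cont hg l b)

lemma mbra_cont {f g : α → Mat k} (hf : Continuous f) (hg : Continuous g) :
    Continuous fun p => mbra (f p) (g p) :=
  (mmul_cont hf hg).sub (mmul_cont hg hf)

end PdCalc
section PdCalc2
variable {n k : ℕ} {x : Fin n → ℝ} {i : Fin n} {t : ℝ}

lemma pd_add {E : Type*} [NormedAddCommGroup E] [NormedSpace ℝ E] {f g : (Fin n → ℝ) → E}
    (hf : DifferentiableAt ℝ f x) (hg : DifferentiableAt ℝ g x) :
    pd (fun y => f y + g y) x i = pd f x i + pd g x i := by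
  unfold pd; rw [fderiv_fun_add hf hg]; simp

lemma pd_sub {E : Type*} [NormedAddCommGroup E] [NormedSpace ℝ E] {f g : (Fin n → ℝ) → E}
    (hf : DifferentiableAt ℝ f x) (hg : DifferentiableAt ℝ g x) :
    pd (fun y => f y - g y) x i = pd f x i - pd g x i := by
  unfold pd; rw [fderiv_fun_sub hf hg]; simp

lemma pd_mmul {f g : (Fin n → ℝ) → Mat k} (hf : DifferentiableAt ℝ f x)
    (hg : DifferentiableAt ℝ g x) :
    pd (fun y => mmul (f y) (g y)) x i = mmul (pd f x i) (g x) + mmul (f x) (pd g x i) := by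
  funext a b
  have e1 : pd (fun y => mmul (f y) (g y)) x i a b
      = pd (fun y => mmul (f y) (g y) a b) x i := (pd_matEntry (mmul_diff hf hg) a b).symm
  have e2 : (fun y => mmul (f y) (g y) a b) = fun y => ∑ l, f y a l * g y l b := rfl
  rw [Pi.add_apply, Pi.add_apply, e1, e2,
    pd_finset_sum _ (fun l _ => (matEntry_diff hf a l).fun_mul (matEntry_diff hg l b))]
  have e3 : (mmul (pd f x i) (g x)) a b + (mmul (f x) (pd g x i)) a b
      = ∑ l, (pd f x i a l * g x l b + f x a l * pd g x i l b) := by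
    simp [mmul, Finset.sum_add_distrib]
  rw [e3]
  refine Finset.sum_congr rfl fun l _ => ?_
  rw [pd_mul (matEntry_diff hf a l) (matEntry_diff hg l b), pd_matEntry hf a l, pd_matEntry hg l b]

lemma pd_mbra {f g : (Fin n → ℝ) → Mat k} (hf : DifferentiableAt ℝ f x)
    (hg : DifferentiableAt ℝ g x) :
    pd (fun y => mbra (f y) (g y)) x i = mbra (pd f x i) (g x) + mbra (f x) (pd g x i) := by
  have e1 : (fun y => mbra (f y) (g y)) = fun y => mmul (f y) (g y) - mmul (g y) (f y) := rfl
  rw [e1, pd_sub (mmul_diff hf hg) (mmul_diff hg hf), pd_mmul hf hg, pd_mmul hg hf]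
  unfold mbra; abel

lemma hasDerivAt_msq {A : ℝ → Mat k} {A' : Mat k} (hA : HasDerivAt A A' t) :
    HasDerivAt (fun s => msq (A s)) (2 * minner A' (A t)) t := by
  have e1 : (fun s => msq (A s)) = fun s => ∑ a, ∑ b, A s a b * A s a b := rfl
  have e2 : 2 * minner A' (A t) = ∑ a, ∑ b, (A' a b * A t a b + A t a b * A' a b) := by
    unfold minner
    rw [Finset.mul_sum]
    refine Finset.sum_congr rfl fun a _ => ?_
    rw [Finset.mul_sum]
    exact Finset.sum_congr rfl fun b _ => by ring
  rw [e1, e2]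
  apply HasDerivAt.fun_sum; intro a _
  apply HasDerivAt.fun_sum; intro b _
  exact (hasDerivAt_pi.mp (hasDerivAt_pi.mp hA a) b).fun_mul (hasDerivAt_pi.mp (hasDerivAt_pi.mp hA a) b)

end PdCalc2
set_option linter.unusedSectionVars false
section IntegralLemmas
variable {n : ℕ} {E : Type*} [NormedAddCommGroup E] [NormedSpace ℝ E]

lemma integrable_of_cont_supp {f : (Fin n → ℝ) → E} (hf : Continuous f)
    {K : Set (Fin n → ℝ)} (hK : IsCompact K) (h0 : ∀ x, x ∉ K → f x = 0) :
    Integrable f (volume : Measure (Fin n → ℝ)) :=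
  hf.integrable_of_hasCompactSupport (HasCompactSupport.intro hK h0)

lemma bound_aux {F : ℝ × (Fin n → ℝ) → E} (hF : Continuous F)
    {K : Set (Fin n → ℝ)} (hK : IsCompact K) (t0 : ℝ) :
    ∃ C : ℝ, ∀ t ∈ Icc (t0 - 1) (t0 + 1), ∀ x ∈ K, ‖F (t, x)‖ ≤ C := by
  obtain ⟨C, hC⟩ := ((isCompact_Icc (a := t0 - 1) (b := t0 + 1)).prod hK).exists_bound_of_continuousOn
    hF.continuousOn
  exact ⟨C, fun t ht x hx => hC (t, x) ⟨ht, hx⟩⟩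

lemma ind_bound_integrable {K : Set (Fin n → ℝ)} (hK : IsCompact K) (C : ℝ) :
    Integrable (K.indicator fun _ => C) (volume : Measure (Fin n → ℝ)) := by
  rw [integrable_indicator_iff hK.measurableSet]
  exact integrableOn_const hK.measure_lt_top.ne

lemma continuous_param_integral {F : ℝ × (Fin n → ℝ) → E} (hF : Continuous F)
    {K : Set (Fin n → ℝ)} (hK : IsCompact K) (h0 : ∀ t x, x ∉ K → F (t, x) = 0) :
    Continuous fun t => ∫ x : Fin n → ℝ, F (t, x) := by
  rw [continuous_iff_continuousAt]
  intro t0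
  obtain ⟨C, hC⟩ := bound_aux hF hK t0
  apply MeasureTheory.continuousAt_of_dominated (bound := K.indicator fun _ => C)
  · exact Eventually.of_forall fun t =>
      (hF.comp (Continuous.prodMk_right t)).aestronglyMeasurable
  · filter_upwards [Ioo_mem_nhds (by linarith : t0 - 1 < t0) (by linarith : t0 < t0 + 1)]
      with t ht
    refine Eventually.of_forall fun x => ?_
    by_cases hx : x ∈ K
    · rw [Set.indicator_of_mem hx]
      exact hC t (Ioo_subset_Icc_self ht) x hx
    · rw [Set.indicator_of_notMem hx, h0 t x hx]
      simp
  · exact ind_bound_integrable hK C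
  · exact Eventually.of_forall fun x =>
      (hF.comp (continuous_id.prodMk continuous_const)).continuousAt

lemma hasDerivAt_param_integral {F F' : ℝ × (Fin n → ℝ) → E} (hF : Continuous F)
    (hF' : Continuous F') {K : Set (Fin n → ℝ)} (hK : IsCompact K)
    (h0 : ∀ t x, x ∉ K → F (t, x) = 0) (h0' : ∀ t x, x ∉ K → F' (t, x) = 0)
    (hd : ∀ t x, HasDerivAt (fun s => F (s, x)) (F' (t, x)) t) (t0 : ℝ) :
    HasDerivAt (fun t => ∫ x : Fin n → ℝ, F (t, x)) (∫ x : Fin n → ℝ, F' (t0, x)) t0 := by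
  obtain ⟨C, hC⟩ := bound_aux hF' hK t0
  refine (hasDerivAt_integral_of_dominated_loc_of_deriv_le (F := fun t x => F (t, x))
    (F' := fun t x => F' (t, x)) (bound := K.indicator fun _ => C) (s := Metric.ball t0 1) (Metric.ball_mem_nhds t0 one_pos)
    (Eventually.of_forall fun t => (hF.comp (Continuous.prodMk_right t)).aestronglyMeasurable)
    (integrable_of_cont_supp (hF.comp (Continuous.prodMk_right t0)) hK (h0 t0))
    ((hF'.comp (Continuous.prodMk_right t0)).aestronglyMeasurable)
    (Eventually.of_forall fun x => fun t ht => ?_)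
    (ind_bound_integrable hK C)
    (Eventually.of_forall fun x => fun t _ => hd t x)).2
  by_cases hx : x ∈ K
  · rw [Set.indicator_of_mem hx]
    rw [Real.ball_eq_Ioo] at ht
    exact hC t (Ioo_subset_Icc_self ht) x hx
  · simp only [Set.indicator_of_notMem hx]
    simp only [h0' t x hx, norm_zero, le_refl]

lemma integral_pd_eq_zero {f : (Fin n → ℝ) → ℝ} (hf : Differentiable ℝ f)
    (hsupp : HasCompactSupport f) {i : Fin n}
    (hc' : Continuous fun x => fderiv ℝ f x (Pi.single i 1)) :
    ∫ x : Fin n → ℝ, pd f x i = 0 := by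
  have key := integral_mul_fderiv_eq_neg_fderiv_mul_of_integrable (μ := volume)
    (f := f) (g := fun _ => (1 : ℝ)) (v := Pi.single i 1)
    ?_ ?_ ?_ (fun x _ => hf x) (fun x _ => differentiable_const (1:ℝ) x)
  · have hz : ∀ x : Fin n → ℝ, fderiv ℝ (fun _ => (1:ℝ)) x (Pi.single i 1) = 0 := by
      intro x; rw [fderiv_fun_const]; simp
    simp only [hz, mul_zero, mul_one, integral_zero] at key
    have : ∫ x : Fin n → ℝ, pd f x i = ∫ x : Fin n → ℝ, fderiv ℝ f x (Pi.single i 1) := rfl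
    rw [this, ← neg_eq_zero, ← key]
  · apply Integrable.mono' (g := fun x => ‖fderiv ℝ f x (Pi.single i 1)‖)
    · exact (hc'.norm).integrable_of_hasCompactSupport
        ((hsupp.fderiv (𝕜 := ℝ)).comp_left (g := fun L : (Fin n → ℝ) →L[ℝ] ℝ => L (Pi.single i 1))
          rfl).norm
    · exact (hc'.mul continuous_const).aestronglyMeasurable
    · exact Eventually.of_forall fun x => by simp
  · have hz : ∀ x : Fin n → ℝ, fderiv ℝ (fun _ => (1:ℝ)) x (Pi.single i 1) = 0 := by
      intro x; rw [fderiv_fun_const]; simp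
    simp only [hz, mul_zero]
    exact integrable_zero _ _ _
  · simp only [mul_one]
    exact hf.continuous.integrable_of_hasCompactSupport hsupp

end IntegralLemmas
section ConnSmooth

def GG {n k : ℕ} (Γ : Conn n k) : ℝ × (Fin n → ℝ) → Fin n → Mat k := fun p => Γ p.1 p.2

def DG {n k : ℕ} (Γ : Conn n k) : ℝ × (Fin n → ℝ) →
    ((ℝ × (Fin n → ℝ)) →L[ℝ] (Fin n → Mat k)) := fderiv ℝ (GG Γ)

def DG2 {n k : ℕ} (Γ : Conn n k) : ℝ × (Fin n → ℝ) →
    ((ℝ × (Fin n → ℝ)) →L[ℝ] ((ℝ × (Fin n → ℝ)) →L[ℝ] (Fin n → Mat k))) := fderiv ℝ (DG Γ)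

def eS {n : ℕ} (i : Fin n) : ℝ × (Fin n → ℝ) := (0, Pi.single i 1)

def eT {n : ℕ} : ℝ × (Fin n → ℝ) := (1, 0)

/-- evaluation of an operator-valued map at a vector and an index -/
def evC {n k : ℕ} (v : ℝ × (Fin n → ℝ)) (j : Fin n) :
    (((ℝ × (Fin n → ℝ)) →L[ℝ] (Fin n → Mat k))) →L[ℝ] Mat k :=
  (ContinuousLinearMap.proj j).comp (ContinuousLinearMap.apply ℝ (Fin n → Mat k) v)

variable {n k : ℕ} {Γ : Conn n k} {t : ℝ} {x : Fin n → ℝ} {i j : Fin n}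

lemma hGdiff (h : ContDiff ℝ ∞ (GG Γ)) : ∀ p, HasFDerivAt (GG Γ) (DG Γ p) p :=
  fun p => ((h.differentiable (by simp)) p).hasFDerivAt

lemma hDGdiff (h : ContDiff ℝ ∞ (GG Γ)) : ∀ p, HasFDerivAt (DG Γ) (DG2 Γ p) p :=
  fun p => (((h.fderiv_right (m := ∞) (by simp)).differentiable (by simp)) p).hasFDerivAt

lemma DG2_symm (h : ContDiff ℝ ∞ (GG Γ)) (p) (v w : ℝ × (Fin n → ℝ)) :
    DG2 Γ p v w = DG2 Γ p w v :=
  second_derivative_symmetric (hGdiff h) (hDGdiff h p) v w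

lemma contDG (h : ContDiff ℝ ∞ (GG Γ)) : Continuous (DG Γ) :=
  (h.fderiv_right (m := ∞) (by simp)).continuous

lemma contDG2 (h : ContDiff ℝ ∞ (GG Γ)) : Continuous (DG2 Γ) :=
  ((h.fderiv_right (m := ∞) (by simp)).fderiv_right (m := ∞) (by simp)).continuous

lemma hasDerivAt_G_t (h : ContDiff ℝ ∞ (GG Γ)) :
    HasDerivAt (fun s => Γ s x j) (DG Γ (t, x) eT j) t := by
  have h1 : HasDerivAt (fun s : ℝ => (s, x)) (eT (n := n)) t :=
    HasDerivAt.prodMk (hasDerivAt_id t) (hasDerivAt_const t x)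
  have h2 : HasDerivAt (fun s => GG Γ (s, x)) (DG Γ (t, x) eT) t :=
    by have := (hGdiff h (t, x)).comp_hasDerivAt t h1; exact this
  exact hasDerivAt_pi.mp h2 j

lemma tderiv_eq (h : ContDiff ℝ ∞ (GG Γ)) : tderiv Γ t x j = DG Γ (t, x) eT j :=
  (hasDerivAt_G_t h).deriv

lemma hasDerivAt_DG_t (h : ContDiff ℝ ∞ (GG Γ)) (v : ℝ × (Fin n → ℝ)) :
    HasDerivAt (fun s => DG Γ (s, x) v j) (DG2 Γ (t, x) eT v j) t := by
  have h1 : HasDerivAt (fun s : ℝ => (s, x)) (eT (n := n)) t :=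
    HasDerivAt.prodMk (hasDerivAt_id t) (hasDerivAt_const t x)
  have h2 : HasDerivAt (fun s => DG Γ (s, x)) (DG2 Γ (t, x) eT) t :=
    (hDGdiff h (t, x)).comp_hasDerivAt t h1
  have h3 := (evC (k := k) v j).hasFDerivAt.comp_hasDerivAt t h2
  exact h3

lemma hasFDerivAt_G_sp (h : ContDiff ℝ ∞ (GG Γ)) :
    HasFDerivAt (fun y => Γ t y j)
      ((ContinuousLinearMap.proj j).comp
        ((DG Γ (t, x)).comp (ContinuousLinearMap.inr ℝ ℝ (Fin n → ℝ)))) x := by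
  have h1 : HasFDerivAt (fun y => GG Γ (t, y))
      ((DG Γ (t, x)).comp (ContinuousLinearMap.inr ℝ ℝ (Fin n → ℝ))) x :=
    (hGdiff h (t, x)).comp x (hasFDerivAt_prodMk_right t x)
  have h2 := (ContinuousLinearMap.proj (R := ℝ) (φ := fun _ : Fin n => Mat k)
    j).hasFDerivAt.comp x h1
  exact h2

lemma diff_Γ_sp (h : ContDiff ℝ ∞ (GG Γ)) : DifferentiableAt ℝ (fun y => Γ t y j) x :=
  (hasFDerivAt_G_sp h).differentiableAt

lemma pd_Γ (h : ContDiff ℝ ∞ (GG Γ)) : pd (fun y => Γ t y j) x i = DG Γ (t, x) (eS i) j := by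
  rw [pd, (hasFDerivAt_G_sp h).fderiv]; rfl

lemma hasFDerivAt_DG_sp (h : ContDiff ℝ ∞ (GG Γ)) (v : ℝ × (Fin n → ℝ)) (j : Fin n) :
    HasFDerivAt (fun y => DG Γ (t, y) v j)
      ((evC (k := k) v j).comp
        ((DG2 Γ (t, x)).comp (ContinuousLinearMap.inr ℝ ℝ (Fin n → ℝ)))) x := by
  have h1 : HasFDerivAt (fun y => DG Γ (t, y))
      ((DG2 Γ (t, x)).comp (ContinuousLinearMap.inr ℝ ℝ (Fin n → ℝ))) x :=
    (hDGdiff h (t, x)).comp x (hasFDerivAt_prodMk_right t x)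
  exact (evC (k := k) v j).hasFDerivAt.comp x h1

lemma diff_DG_sp (h : ContDiff ℝ ∞ (GG Γ)) (v : ℝ × (Fin n → ℝ)) (j : Fin n) :
    DifferentiableAt ℝ (fun y => DG Γ (t, y) v j) x :=
  (hasFDerivAt_DG_sp h v j).differentiableAt

lemma pd_DG_sp (h : ContDiff ℝ ∞ (GG Γ)) (v : ℝ × (Fin n → ℝ)) (j : Fin n) :
    pd (fun y => DG Γ (t, y) v j) x i = DG2 Γ (t, x) (eS i) v j := by
  rw [pd, (hasFDerivAt_DG_sp h v j).fderiv]; rfl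

lemma tderiv_fun (h : ContDiff ℝ ∞ (GG Γ)) :
    (fun y => tderiv Γ t y j) = fun y => DG Γ (t, y) eT j :=
  funext fun _ => tderiv_eq h

lemma diff_tderiv (h : ContDiff ℝ ∞ (GG Γ)) :
    DifferentiableAt ℝ (fun y => tderiv Γ t y j) x := by
  rw [tderiv_fun h]; exact diff_DG_sp h eT j

lemma pd_tderiv (h : ContDiff ℝ ∞ (GG Γ)) :
    pd (fun y => tderiv Γ t y j) x i = DG2 Γ (t, x) (eS i) eT j := by
  rw [tderiv_fun h]; exact pd_DG_sp h eT j

lemma hasDerivAt_pdΓ (h : ContDiff ℝ ∞ (GG Γ)) :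
    HasDerivAt (fun s => pd (fun y => Γ s y j) x i)
      (pd (fun y => tderiv Γ t y j) x i) t := by
  have e1 : (fun s => pd (fun y => Γ s y j) x i) = fun s => DG Γ (s, x) (eS i) j :=
    funext fun _ => pd_Γ h
  rw [e1, pd_tderiv h,
    show DG2 Γ (t, x) (eS i) eT = DG2 Γ (t, x) eT (eS i) from DG2_symm h _ _ _]
  exact hasDerivAt_DG_t h (eS i)

lemma hasDerivAt_curv (h : ContDiff ℝ ∞ (GG Γ)) :
    HasDerivAt (fun s => curv Γ s x i j)
      (covD Γ t (fun y => tderiv Γ t y j) x i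
        - covD Γ t (fun y => tderiv Γ t y i) x j) t := by
  have e1 : (fun s => curv Γ s x i j) = fun s =>
      pd (fun y => Γ s y j) x i - pd (fun y => Γ s y i) x j + mbra (Γ s x i) (Γ s x j) := rfl
  rw [e1]
  have hm : HasDerivAt (fun s => mbra (Γ s x i) (Γ s x j))
      (mbra (tderiv Γ t x i) (Γ t x j) + mbra (Γ t x i) (tderiv Γ t x j)) t := by
    have := hasDerivAt_mbra (t := t) (A := fun s => Γ s x i) (B := fun s => Γ s x j)
      (hasDerivAt_G_t h (t := t) (x := x) (j := i)) (hasDerivAt_G_t h (t := t) (x := x) (j := j))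
    rwa [← tderiv_eq h, ← tderiv_eq h] at this
  have hall := ((hasDerivAt_pdΓ h (t := t) (x := x) (j := j) (i := i)).sub
    (hasDerivAt_pdΓ h (t := t) (x := x) (j := i) (i := j))).add hm
  have e2 : covD Γ t (fun y => tderiv Γ t y j) x i - covD Γ t (fun y => tderiv Γ t y i) x j
      = pd (fun y => tderiv Γ t y j) x i - pd (fun y => tderiv Γ t y i) x j
        + (mbra (tderiv Γ t x i) (Γ t x j) + mbra (Γ t x i) (tderiv Γ t x j)) := by
    unfold covD
    rw [mbra_antisymm (tderiv Γ t x i) (Γ t x j)]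
    abel
  rw [e2]
  exact hall

lemma diff_curv (h : ContDiff ℝ ∞ (GG Γ)) :
    DifferentiableAt ℝ (fun y => curv Γ t y i j) x := by
  have e1 : (fun y => curv Γ t y i j) = fun y =>
      DG Γ (t, y) (eS i) j - DG Γ (t, y) (eS j) i + mbra (Γ t y i) (Γ t y j) :=
    funext fun y => by rw [curv, pd_Γ h, pd_Γ h]
  rw [e1]
  exact ((diff_DG_sp h (eS i) j).sub (diff_DG_sp h (eS j) i)).add
    (mbra_diff (diff_Γ_sp h) (diff_Γ_sp h))

lemma pd_curv (h : ContDiff ℝ ∞ (GG Γ)) (i' : Fin n) :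
    pd (fun y => curv Γ t y i j) x i' =
      DG2 Γ (t, x) (eS i') (eS i) j - DG2 Γ (t, x) (eS i') (eS j) i
        + (mbra (DG Γ (t, x) (eS i') i) (Γ t x j) + mbra (Γ t x i) (DG Γ (t, x) (eS i') j)) := by
  have e1 : (fun y => curv Γ t y i j) = fun y =>
      DG Γ (t, y) (eS i) j - DG Γ (t, y) (eS j) i + mbra (Γ t y i) (Γ t y j) :=
    funext fun y => by rw [curv, pd_Γ h, pd_Γ h]
  rw [e1, pd_add ((diff_DG_sp h (eS i) j).fun_sub (diff_DG_sp h (eS j) i))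
    (mbra_diff (diff_Γ_sp h) (diff_Γ_sp h)),
    pd_sub (diff_DG_sp h (eS i) j) (diff_DG_sp h (eS j) i),
    pd_mbra (diff_Γ_sp h) (diff_Γ_sp h),
    pd_DG_sp h (eS i) j, pd_DG_sp h (eS j) i, pd_Γ h, pd_Γ h]

-- joint continuity lemmas
lemma cont_Γj (h : ContDiff ℝ ∞ (GG Γ)) :
    Continuous fun p : ℝ × (Fin n → ℝ) => Γ p.1 p.2 j :=
  (continuous_apply j).comp h.continuous

lemma cont_DG_apply (h : ContDiff ℝ ∞ (GG Γ)) (v : ℝ × (Fin n → ℝ)) (j : Fin n) :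
    Continuous fun p : ℝ × (Fin n → ℝ) => DG Γ p v j :=
  (continuous_apply j).comp
    ((ContinuousLinearMap.apply ℝ (Fin n → Mat k) v).continuous.comp (contDG h))

lemma cont_DG2_apply (h : ContDiff ℝ ∞ (GG Γ)) (v w : ℝ × (Fin n → ℝ)) (j : Fin n) :
    Continuous fun p : ℝ × (Fin n → ℝ) => DG2 Γ p v w j := by
  have h1 : Continuous fun p : ℝ × (Fin n → ℝ) => DG2 Γ p v :=
    (ContinuousLinearMap.apply ℝ _ v).continuous.comp (contDG2 h)
  exact (continuous_apply j).comp
    ((ContinuousLinearMap.apply ℝ (Fin n → Mat k) w).continuous.comp h1)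

lemma cont_tderiv (h : ContDiff ℝ ∞ (GG Γ)) :
    Continuous fun p : ℝ × (Fin n → ℝ) => tderiv Γ p.1 p.2 j := by
  have e : (fun p : ℝ × (Fin n → ℝ) => tderiv Γ p.1 p.2 j) = fun p => DG Γ p eT j :=
    funext fun p => by rw [tderiv_eq h]
  rw [e]; exact cont_DG_apply h eT j

lemma cont_pdΓ (h : ContDiff ℝ ∞ (GG Γ)) :
    Continuous fun p : ℝ × (Fin n → ℝ) => pd (fun y => Γ p.1 y j) p.2 i := by
  have e : (fun p : ℝ × (Fin n → ℝ) => pd (fun y => Γ p.1 y j) p.2 i)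
      = fun p => DG Γ p (eS i) j := funext fun p => by rw [pd_Γ h]
  rw [e]; exact cont_DG_apply h (eS i) j

lemma cont_pdtderiv (h : ContDiff ℝ ∞ (GG Γ)) :
    Continuous fun p : ℝ × (Fin n → ℝ) => pd (fun y => tderiv Γ p.1 y j) p.2 i := by
  have e : (fun p : ℝ × (Fin n → ℝ) => pd (fun y => tderiv Γ p.1 y j) p.2 i)
      = fun p => DG2 Γ p (eS i) eT j := funext fun p => by rw [pd_tderiv h]
  rw [e]; exact cont_DG2_apply h (eS i) eT j

lemma cont_curv (h : ContDiff ℝ ∞ (GG Γ)) :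
    Continuous fun p : ℝ × (Fin n → ℝ) => curv Γ p.1 p.2 i j := by
  have e : (fun p : ℝ × (Fin n → ℝ) => curv Γ p.1 p.2 i j)
      = fun p => DG Γ p (eS i) j - DG Γ p (eS j) i + mbra (Γ p.1 p.2 i) (Γ p.1 p.2 j) :=
    funext fun p => by rw [curv, pd_Γ h, pd_Γ h]
  rw [e]
  exact ((cont_DG_apply h (eS i) j).sub (cont_DG_apply h (eS j) i)).add
    (mbra_cont (cont_Γj h) (cont_Γj h))

lemma cont_pdcurv (h : ContDiff ℝ ∞ (GG Γ)) (i' : Fin n) :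
    Continuous fun p : ℝ × (Fin n → ℝ) => pd (fun y => curv Γ p.1 y i j) p.2 i' := by
  have e : (fun p : ℝ × (Fin n → ℝ) => pd (fun y => curv Γ p.1 y i j) p.2 i')
      = fun p => DG2 Γ p (eS i') (eS i) j - DG2 Γ p (eS i') (eS j) i
        + (mbra (DG Γ p (eS i') i) (Γ p.1 p.2 j) + mbra (Γ p.1 p.2 i) (DG Γ p (eS i') j)) :=
    funext fun p => by rw [pd_curv h]
  rw [e]
  exact ((cont_DG2_apply h (eS i') (eS i) j).sub (cont_DG2_apply h (eS i') (eS j) i)).add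
    ((mbra_cont (cont_DG_apply h (eS i') i) (cont_Γj h)).add
      (mbra_cont (cont_Γj h) (cont_DG_apply h (eS i') j)))

lemma cont_covD_tderiv (h : ContDiff ℝ ∞ (GG Γ)) :
    Continuous fun p : ℝ × (Fin n → ℝ) => covD Γ p.1 (fun y => tderiv Γ p.1 y j) p.2 i := by
  have e : (fun p : ℝ × (Fin n → ℝ) => covD Γ p.1 (fun y => tderiv Γ p.1 y j) p.2 i)
      = fun p => pd (fun y => tderiv Γ p.1 y j) p.2 i
          + mbra (Γ p.1 p.2 i) (tderiv Γ p.1 p.2 j) := rfl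
  rw [e]
  exact (cont_pdtderiv h).add (mbra_cont (cont_Γj h) (cont_tderiv h))

end ConnSmooth
section MoreAlg
variable {n k : ℕ}

lemma minner_neg_right (A B : Mat k) : minner A (-B) = - minner A B := by
  rw [minner_comm, minner_neg_left, minner_comm]

lemma minner_add_right (A B C : Mat k) : minner A (B + C) = minner A B + minner A C := by
  rw [minner_comm, minner_add_left, minner_comm B A, minner_comm C A]

lemma minner_sum_right {ι : Type*} (s : Finset ι) (f : ι → Mat k) (B : Mat k) :
    minner B (∑ i ∈ s, f i) = ∑ i ∈ s, minner B (f i) := by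
  rw [minner_comm, minner_sum_left]
  exact Finset.sum_congr rfl fun i _ => minner_comm _ _

lemma curv_antisymm {Γ : Conn n k} {t : ℝ} {x : Fin n → ℝ} (i j : Fin n) :
    curv Γ t x j i = - curv Γ t x i j := by
  unfold curv
  rw [mbra_antisymm (Γ t x j) (Γ t x i)]
  abel

end MoreAlg

section ClaimE
variable {n k : ℕ}

lemma pd_w {Γ : Conn n k} (hG : ContDiff ℝ ∞ (GG Γ))
    {φ : (Fin n → ℝ) → ℝ} (hφ : ContDiff ℝ 1 φ) (t : ℝ) (x : Fin n → ℝ) (i : Fin n) :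
    pd (fun y => (∑ j, minner (tderiv Γ t y j) (curv Γ t y i j)) * φ y ^ 2) x i
    = (∑ j, (minner (pd (fun y => tderiv Γ t y j) x i) (curv Γ t x i j)
          + minner (tderiv Γ t x j) (pd (fun y => curv Γ t y i j) x i))) * φ x ^ 2
      + (∑ j, minner (tderiv Γ t x j) (curv Γ t x i j)) * (2 * φ x * pd φ x i) := by
  have hφd : ∀ y, DifferentiableAt ℝ φ y := fun y => (hφ.differentiable one_ne_zero) y
  have hq : ∀ y : Fin n → ℝ, DifferentiableAt ℝ (fun z => φ z ^ 2) y := fun y => (hφd y).pow 2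
  have pdq : pd (fun z => φ z ^ 2) x i = 2 * φ x * pd φ x i := by
    have e : (fun z : Fin n → ℝ => φ z ^ 2) = fun z => φ z * φ z := funext fun z => by ring
    rw [e, pd_mul (hφd x) (hφd x)]; ring
  have hdiffS : DifferentiableAt ℝ (fun y => ∑ j, minner (tderiv Γ t y j) (curv Γ t y i j)) x :=
    DifferentiableAt.fun_sum fun j _ => minner_diff (diff_tderiv hG) (diff_curv hG)
  rw [pd_mul hdiffS (hq x), pdq,
    pd_finset_sum _ (fun j _ => minner_diff (diff_tderiv hG) (diff_curv hG))]
  have e : ∀ j : Fin n, pd (fun y => minner (tderiv Γ t y j) (curv Γ t y i j)) x i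
      = minner (pd (fun y => tderiv Γ t y j) x i) (curv Γ t x i j)
        + minner (tderiv Γ t x j) (pd (fun y => curv Γ t y i j) x i) :=
    fun j => pd_minner (diff_tderiv hG) (diff_curv hG)
  simp_rw [e]

lemma claimE {Γ : Conn n k} (hG : ContDiff ℝ ∞ (GG Γ))
    (hskew : ∀ t x i a b, Γ t x i b a = - (Γ t x i a b))
    {φ : (Fin n → ℝ) → ℝ} (hφ : ContDiff ℝ 1 φ) (t : ℝ) (x : Fin n → ℝ)
    (hfl : ∀ j, tderiv Γ t x j = ∑ i, covD Γ t (fun y => curv Γ t y i j) x i) :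
    (1/2) * (∑ i, ∑ j, minner (covD Γ t (fun y => tderiv Γ t y j) x i
        - covD Γ t (fun y => tderiv Γ t y i) x j) (curv Γ t x i j)) * φ x ^ 2
    = (∑ i, pd (fun y => (∑ j, minner (tderiv Γ t y j) (curv Γ t y i j)) * φ y ^ 2) x i)
      - ((∑ j, msq (tderiv Γ t x j)) * φ x ^ 2
          + 2 * φ x * ∑ j, minner (∑ i, pd φ x i • curv Γ t x i j) (tderiv Γ t x j)) := by
  have hφd : ∀ y, DifferentiableAt ℝ φ y := fun y => (hφ.differentiable one_ne_zero) y
  have hq : ∀ y : Fin n → ℝ, DifferentiableAt ℝ (fun z => φ z ^ 2) y := fun y => (hφd y).pow 2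
  have pdq : ∀ i : Fin n, pd (fun z => φ z ^ 2) x i = 2 * φ x * pd φ x i := by
    intro i
    have e : (fun z : Fin n → ℝ => φ z ^ 2) = fun z => φ z * φ z := funext fun z => by ring
    rw [e, pd_mul (hφd x) (hφd x)]; ring
  have hdiffS : ∀ i : Fin n,
      DifferentiableAt ℝ (fun y => ∑ j, minner (tderiv Γ t y j) (curv Γ t y i j)) x :=
    fun i => DifferentiableAt.fun_sum fun j _ => minner_diff (diff_tderiv hG) (diff_curv hG)
  -- expand pd of w i
  have pdw : ∀ i : Fin n,
      pd (fun y => (∑ j, minner (tderiv Γ t y j) (curv Γ t y i j)) * φ y ^ 2) x i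
      = (∑ j, (minner (pd (fun y => tderiv Γ t y j) x i) (curv Γ t x i j)
            + minner (tderiv Γ t x j) (pd (fun y => curv Γ t y i j) x i))) * φ x ^ 2
        + (∑ j, minner (tderiv Γ t x j) (curv Γ t x i j)) * (2 * φ x * pd φ x i) :=
    fun i => pd_w hG hφ t x i
  -- abbreviate the scalar double sums
  set P : ℝ := ∑ i, ∑ j, minner (pd (fun y => tderiv Γ t y j) x i) (curv Γ t x i j) with hP
  set Q : ℝ := ∑ i, ∑ j,
    minner (tderiv Γ t x j) (pd (fun y => curv Γ t y i j) x i) with hQ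
  set Rb : ℝ := ∑ i, ∑ j,
    minner (tderiv Γ t x j) (mbra (Γ t x i) (curv Γ t x i j)) with hRb
  -- LHS = (P - Rb) * φ²
  have hcov : ∀ i j : Fin n, minner (covD Γ t (fun y => tderiv Γ t y j) x i) (curv Γ t x i j)
      = minner (pd (fun y => tderiv Γ t y j) x i) (curv Γ t x i j)
        - minner (tderiv Γ t x j) (mbra (Γ t x i) (curv Γ t x i j)) := by
    intro i j
    have e : covD Γ t (fun y => tderiv Γ t y j) x i
        = pd (fun y => tderiv Γ t y j) x i + mbra (Γ t x i) (tderiv Γ t x j) := rfl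
    rw [e, minner_add_left, minner_mbra_left_skew (fun a b => hskew t x i a b)]
    ring
  have hanti : (∑ i, ∑ j, minner (covD Γ t (fun y => tderiv Γ t y i) x j) (curv Γ t x i j))
      = - ∑ i, ∑ j, minner (covD Γ t (fun y => tderiv Γ t y j) x i) (curv Γ t x i j) := by
    rw [Finset.sum_comm, ← Finset.sum_neg_distrib]
    refine Finset.sum_congr rfl fun i _ => ?_
    rw [← Finset.sum_neg_distrib]
    refine Finset.sum_congr rfl fun j _ => ?_
    rw [curv_antisymm i j, minner_neg_right]
  have hLHS : (1/2) * (∑ i, ∑ j, minner (covD Γ t (fun y => tderiv Γ t y j) x i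
        - covD Γ t (fun y => tderiv Γ t y i) x j) (curv Γ t x i j)) * φ x ^ 2
      = (P - Rb) * φ x ^ 2 := by
    have e1 : (∑ i, ∑ j, minner (covD Γ t (fun y => tderiv Γ t y j) x i
          - covD Γ t (fun y => tderiv Γ t y i) x j) (curv Γ t x i j))
        = (∑ i, ∑ j, minner (covD Γ t (fun y => tderiv Γ t y j) x i) (curv Γ t x i j))
          - ∑ i, ∑ j, minner (covD Γ t (fun y => tderiv Γ t y i) x j) (curv Γ t x i j) := by
      simp_rw [minner_sub_left, Finset.sum_sub_distrib]
    rw [e1, hanti]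
    have e2 : (∑ i, ∑ j, minner (covD Γ t (fun y => tderiv Γ t y j) x i) (curv Γ t x i j))
        = P - Rb := by
      rw [hP, hRb, ← Finset.sum_sub_distrib]
      refine Finset.sum_congr rfl fun i _ => ?_
      rw [← Finset.sum_sub_distrib]
      exact Finset.sum_congr rfl fun j _ => hcov i j
    rw [e2]; ring
  -- flow: msq sum = Q + Rb
  have hflow2 : (∑ j, msq (tderiv Γ t x j)) = Q + Rb := by
    have e1 : ∀ j : Fin n, msq (tderiv Γ t x j)
        = ∑ i, (minner (tderiv Γ t x j) (pd (fun y => curv Γ t y i j) x i)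
            + minner (tderiv Γ t x j) (mbra (Γ t x i) (curv Γ t x i j))) := by
      intro j
      have e0 : msq (tderiv Γ t x j) = minner (tderiv Γ t x j)
          (∑ i, covD Γ t (fun y => curv Γ t y i j) x i) := by
        rw [msq]; exact congrArg (minner _) (hfl j)
      rw [e0, minner_sum_right]
      refine Finset.sum_congr rfl fun i _ => ?_
      have e : covD Γ t (fun y => curv Γ t y i j) x i
          = pd (fun y => curv Γ t y i j) x i + mbra (Γ t x i) (curv Γ t x i j) := rfl
      rw [e, minner_add_right]
    calc (∑ j, msq (tderiv Γ t x j))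
        = ∑ j, ∑ i, (minner (tderiv Γ t x j) (pd (fun y => curv Γ t y i j) x i)
            + minner (tderiv Γ t x j) (mbra (Γ t x i) (curv Γ t x i j))) :=
          Finset.sum_congr rfl fun j _ => e1 j
      _ = (∑ j, ∑ i, minner (tderiv Γ t x j) (pd (fun y => curv Γ t y i j) x i))
          + ∑ j, ∑ i, minner (tderiv Γ t x j) (mbra (Γ t x i) (curv Γ t x i j)) := by
          simp_rw [Finset.sum_add_distrib]
      _ = Q + Rb := by
          rw [hQ, hRb]
          congr 1
          · exact Finset.sum_comm
          · exact Finset.sum_comm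
  -- the gradient-cutoff term
  have hT : (∑ j, minner (∑ i, pd φ x i • curv Γ t x i j) (tderiv Γ t x j))
      = ∑ i, ∑ j, pd φ x i * minner (tderiv Γ t x j) (curv Γ t x i j) := by
    simp_rw [minner_sum_left, minner_smul_left]
    rw [Finset.sum_comm]
    refine Finset.sum_congr rfl fun i _ => Finset.sum_congr rfl fun j _ => ?_
    rw [minner_comm]
  -- assemble
  rw [hLHS]
  have pdwsum : (∑ i, pd (fun y => (∑ j, minner (tderiv Γ t y j) (curv Γ t y i j)) * φ y ^ 2) x i)
      = (P + Q) * φ x ^ 2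
        + 2 * φ x * ∑ i, ∑ j, pd φ x i * minner (tderiv Γ t x j) (curv Γ t x i j) := by
    calc (∑ i, pd (fun y => (∑ j, minner (tderiv Γ t y j) (curv Γ t y i j)) * φ y ^ 2) x i)
        = ∑ i, ((∑ j, (minner (pd (fun y => tderiv Γ t y j) x i) (curv Γ t x i j)
              + minner (tderiv Γ t x j) (pd (fun y => curv Γ t y i j) x i))) * φ x ^ 2
            + (∑ j, minner (tderiv Γ t x j) (curv Γ t x i j)) * (2 * φ x * pd φ x i)) :=
          Finset.sum_congr rfl fun i _ => pdw i
      _ = (∑ i, ∑ j, (minner (pd (fun y => tderiv Γ t y j) x i) (curv Γ t x i j)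
              + minner (tderiv Γ t x j) (pd (fun y => curv Γ t y i j) x i))) * φ x ^ 2
            + ∑ i, (∑ j, minner (tderiv Γ t x j) (curv Γ t x i j)) * (2 * φ x * pd φ x i) := by
          rw [Finset.sum_add_distrib, Finset.sum_mul]
      _ = (P + Q) * φ x ^ 2
            + 2 * φ x * ∑ i, ∑ j, pd φ x i * minner (tderiv Γ t x j) (curv Γ t x i j) := by
          congr 1
          · congr 1
            rw [hP, hQ, ← Finset.sum_add_distrib]
            exact Finset.sum_congr rfl fun i _ => Finset.sum_add_distrib
          · rw [Finset.mul_sum]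
            refine Finset.sum_congr rfl fun i _ => ?_
            rw [Finset.sum_mul, Finset.mul_sum]
            exact Finset.sum_congr rfl fun j _ => by ring
  rw [pdwsum, hflow2, hT]
  ring

end ClaimE
/-- Localized energy identity along the Yang–Mills flow:
`(1/4)∫ (|F_{t₁}|² − |F_{t₂}|²) φ² = ∫_{t₁}^{t₂} ∫ (|∂_tΓ|²φ² + 2φ Σ_j ⟨Σ_i ∂_iφ F_{ij}, (∂_tΓ)_j⟩)`. -/
theorem yangMills_localized_energy_identity
    (n k : ℕ) (hn : 2 ≤ n) (hk : 1 ≤ k) (t1 t2 : ℝ) (ht : t1 ≤ t2)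
    (Γ : Conn n k) (hsm : IsSmoothConn Γ) (hflow : IsYMFlowOn Γ (Icc t1 t2))
    (φ : (Fin n → ℝ) → ℝ) (hφ : ContDiff ℝ 1 φ) (hφc : HasCompactSupport φ)
    (hφ0 : ∀ x, 0 ≤ φ x) :
    1 / 4 * ∫ x : Fin n → ℝ, (normF2 Γ t1 x - normF2 Γ t2 x) * φ x ^ 2
      = ∫ t in Icc t1 t2, ∫ x : Fin n → ℝ,
          ((∑ j, msq (tderiv Γ t x j)) * φ x ^ 2
            + 2 * φ x * ∑ j, minner (∑ i, pd φ x i • curv Γ t x i j) (tderiv Γ t x j)) := by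
  classical
  have hG : ContDiff ℝ ∞ (GG Γ) := hsm.1
  set K : Set (Fin n → ℝ) := tsupport φ with hKdef
  have hK : IsCompact K := hφc
  have φ0 : ∀ x, x ∉ K → φ x = 0 := fun x hx => image_eq_zero_of_notMem_tsupport hx
  have hφd : Differentiable ℝ φ := hφ.differentiable one_ne_zero
  have hφcont : Continuous φ := hφ.continuous
  have hpdφ : ∀ i : Fin n, Continuous fun x => pd φ x i := by
    intro i
    have h1 : Continuous (fderiv ℝ φ) := (hφ.fderiv_right (m := 0) (by simp)).continuous
    exact (ContinuousLinearMap.apply ℝ ℝ (Pi.single i 1)).continuous.comp h1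
  set FF : ℝ × (Fin n → ℝ) → ℝ := fun p => 1 / 4 * normF2 Γ p.1 p.2 * φ p.2 ^ 2 with hFFdef
  set FF' : ℝ × (Fin n → ℝ) → ℝ := fun p => 1 / 2 * (∑ i, ∑ j, minner
      (covD Γ p.1 (fun y => tderiv Γ p.1 y j) p.2 i
        - covD Γ p.1 (fun y => tderiv Γ p.1 y i) p.2 j) (curv Γ p.1 p.2 i j)) * φ p.2 ^ 2
    with hFF'def
  set RR : ℝ × (Fin n → ℝ) → ℝ := fun p => (∑ j, msq (tderiv Γ p.1 p.2 j)) * φ p.2 ^ 2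
      + 2 * φ p.2 * ∑ j, minner (∑ i, pd φ p.2 i • curv Γ p.1 p.2 i j) (tderiv Γ p.1 p.2 j)
    with hRRdef
  -- continuity
  have contφ2 : Continuous fun p : ℝ × (Fin n → ℝ) => φ p.2 ^ 2 :=
    (hφcont.comp continuous_snd).pow 2
  have contFF : Continuous FF := by
    have h1 : Continuous fun p : ℝ × (Fin n → ℝ) => normF2 Γ p.1 p.2 :=
      continuous_finset_sum _ fun i _ => continuous_finset_sum _ fun j _ =>
        minner_cont (cont_curv hG) (cont_curv hG)
    exact (continuous_const.mul h1).mul contφ2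
  have contFF' : Continuous FF' := by
    have h1 : Continuous fun p : ℝ × (Fin n → ℝ) => ∑ i, ∑ j, minner
        (covD Γ p.1 (fun y => tderiv Γ p.1 y j) p.2 i
          - covD Γ p.1 (fun y => tderiv Γ p.1 y i) p.2 j) (curv Γ p.1 p.2 i j) :=
      continuous_finset_sum _ fun i _ => continuous_finset_sum _ fun j _ =>
        minner_cont ((cont_covD_tderiv hG).sub (cont_covD_tderiv hG)) (cont_curv hG)
    exact (continuous_const.mul h1).mul contφ2
  have contRR : Continuous RR := by
    apply Continuous.add
    · exact (continuous_finset_sum _ fun j _ =>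
        minner_cont (cont_tderiv hG) (cont_tderiv hG)).mul contφ2
    · exact (continuous_const.mul (hφcont.comp continuous_snd)).mul
        (continuous_finset_sum _ fun j _ => minner_cont
          (continuous_finset_sum _ fun i _ =>
            Continuous.smul ((hpdφ i).comp continuous_snd) (cont_curv hG))
          (cont_tderiv hG))
  -- vanishing off K
  have FF0 : ∀ t x, x ∉ K → FF (t, x) = 0 := fun t x hx => by
    simp [hFFdef, φ0 x hx]
  have FF'0 : ∀ t x, x ∉ K → FF' (t, x) = 0 := fun t x hx => by
    simp [hFF'def, φ0 x hx]
  have RR0 : ∀ t x, x ∉ K → RR (t, x) = 0 := fun t x hx => by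
    simp [hRRdef, φ0 x hx]
  -- integrability of slices
  have intFF : ∀ t, Integrable (fun x => FF (t, x)) (volume : Measure (Fin n → ℝ)) :=
    fun t => integrable_of_cont_supp (contFF.comp (Continuous.prodMk_right t)) hK (FF0 t)
  have intRR : ∀ t, Integrable (fun x => RR (t, x)) (volume : Measure (Fin n → ℝ)) :=
    fun t => integrable_of_cont_supp (contRR.comp (Continuous.prodMk_right t)) hK (RR0 t)
  -- pointwise time derivative
  have hFFd : ∀ t x, HasDerivAt (fun s => FF (s, x)) (FF' (t, x)) t := by
    intro t x
    have hsum : HasDerivAt (fun s => ∑ i, ∑ j, msq (curv Γ s x i j))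
        (∑ i, ∑ j, 2 * minner (covD Γ t (fun y => tderiv Γ t y j) x i
          - covD Γ t (fun y => tderiv Γ t y i) x j) (curv Γ t x i j)) t := by
      apply HasDerivAt.fun_sum; intro i _
      apply HasDerivAt.fun_sum; intro j _
      exact hasDerivAt_msq (hasDerivAt_curv hG)
    have h2 := (hsum.const_mul (1 / 4 : ℝ)).mul_const (φ x ^ 2)
    have h3 : HasDerivAt (fun s => FF (s, x))
        (1 / 4 * (∑ i, ∑ j, 2 * minner (covD Γ t (fun y => tderiv Γ t y j) x i
          - covD Γ t (fun y => tderiv Γ t y i) x j) (curv Γ t x i j)) * φ x ^ 2) t := h2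
    have e : 1 / 4 * (∑ i, ∑ j, 2 * minner (covD Γ t (fun y => tderiv Γ t y j) x i
          - covD Γ t (fun y => tderiv Γ t y i) x j) (curv Γ t x i j)) * φ x ^ 2
        = FF' (t, x) := by
      rw [hFF'def]
      simp only
      simp_rw [← Finset.mul_sum]
      ring
    rw [← e]
    exact h3
  set H : ℝ → ℝ := fun t => ∫ x : Fin n → ℝ, FF (t, x) with hHdef
  have hHd : ∀ t0, HasDerivAt H (∫ x : Fin n → ℝ, FF' (t0, x)) t0 :=
    fun t0 => hasDerivAt_param_integral contFF contFF' hK FF0 FF'0 hFFd t0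
  -- spatial integration by parts at fixed time
  have key : ∀ t ∈ Icc t1 t2,
      (∫ x : Fin n → ℝ, FF' (t, x)) = - ∫ x : Fin n → ℝ, RR (t, x) := by
    intro t htt
    have hpt : ∀ x, FF' (t, x)
        = (∑ i, pd (fun y => (∑ j, minner (tderiv Γ t y j) (curv Γ t y i j)) * φ y ^ 2) x i)
          - RR (t, x) := fun x =>
      claimE hG hsm.2 hφ t x (fun j => hflow t htt x j)
    have hwdiff : ∀ i : Fin n, Differentiable ℝ
        (fun y => (∑ j, minner (tderiv Γ t y j) (curv Γ t y i j)) * φ y ^ 2) :=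
      fun i y => DifferentiableAt.fun_mul
        (DifferentiableAt.fun_sum fun j _ => minner_diff (diff_tderiv hG) (diff_curv hG))
        ((hφd y).pow 2)
    have hwsupp : ∀ i : Fin n, HasCompactSupport
        (fun y => (∑ j, minner (tderiv Γ t y j) (curv Γ t y i j)) * φ y ^ 2) :=
      fun i => HasCompactSupport.intro hK (fun x hx => by simp [φ0 x hx])
    have contpdw : ∀ i : Fin n, Continuous fun x =>
        pd (fun y => (∑ j, minner (tderiv Γ t y j) (curv Γ t y i j)) * φ y ^ 2) x i := by
      intro i
      have e : (fun x => pd (fun y => (∑ j, minner (tderiv Γ t y j) (curv Γ t y i j)) * φ y ^ 2) x i)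
          = fun x => (∑ j, (minner (pd (fun y => tderiv Γ t y j) x i) (curv Γ t x i j)
              + minner (tderiv Γ t x j) (pd (fun y => curv Γ t y i j) x i))) * φ x ^ 2
            + (∑ j, minner (tderiv Γ t x j) (curv Γ t x i j)) * (2 * φ x * pd φ x i) :=
        funext fun x => pd_w hG hφ t x i
      rw [e]
      apply Continuous.add
      · refine Continuous.mul (continuous_finset_sum _ fun j _ => Continuous.add ?_ ?_)
          (hφcont.pow 2)
        · exact minner_cont ((cont_pdtderiv hG).comp (Continuous.prodMk_right t))
            ((cont_curv hG).comp (Continuous.prodMk_right t))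
        · exact minner_cont ((cont_tderiv hG).comp (Continuous.prodMk_right t))
            ((cont_pdcurv hG i).comp (Continuous.prodMk_right t))
      · exact Continuous.mul (continuous_finset_sum _ fun j _ =>
          minner_cont ((cont_tderiv hG).comp (Continuous.prodMk_right t))
            ((cont_curv hG).comp (Continuous.prodMk_right t)))
          ((continuous_const.mul hφcont).mul (hpdφ i))
    have pdw0 : ∀ (i : Fin n) x, x ∉ K →
        pd (fun y => (∑ j, minner (tderiv Γ t y j) (curv Γ t y i j)) * φ y ^ 2) x i = 0 := by
      intro i x hx
      rw [pd_w hG hφ t x i, φ0 x hx]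
      ring
    have intpdw : ∀ i : Fin n, Integrable (fun x =>
        pd (fun y => (∑ j, minner (tderiv Γ t y j) (curv Γ t y i j)) * φ y ^ 2) x i)
        (volume : Measure (Fin n → ℝ)) :=
      fun i => integrable_of_cont_supp (contpdw i) hK (pdw0 i)
    calc (∫ x : Fin n → ℝ, FF' (t, x))
        = ∫ x : Fin n → ℝ,
            ((∑ i, pd (fun y => (∑ j, minner (tderiv Γ t y j) (curv Γ t y i j)) * φ y ^ 2) x i)
              - RR (t, x)) := by
          congr 1; funext x; exact hpt x
      _ = (∫ x : Fin n → ℝ, ∑ i,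
            pd (fun y => (∑ j, minner (tderiv Γ t y j) (curv Γ t y i j)) * φ y ^ 2) x i)
          - ∫ x : Fin n → ℝ, RR (t, x) :=
          integral_sub (integrable_finset_sum _ fun i _ => intpdw i) (intRR t)
      _ = (∑ i, ∫ x : Fin n → ℝ,
            pd (fun y => (∑ j, minner (tderiv Γ t y j) (curv Γ t y i j)) * φ y ^ 2) x i)
          - ∫ x : Fin n → ℝ, RR (t, x) := by
          rw [integral_finset_sum _ fun i _ => intpdw i]
      _ = - ∫ x : Fin n → ℝ, RR (t, x) := by
          rw [Finset.sum_eq_zero fun i _ =>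
            integral_pd_eq_zero (hwdiff i) (hwsupp i) (contpdw i)]
          ring
  -- fundamental theorem of calculus
  have hcFF'int : Continuous fun t => ∫ x : Fin n → ℝ, FF' (t, x) :=
    continuous_param_integral contFF' hK FF'0
  have hFTC : ∫ t in t1..t2, (∫ x : Fin n → ℝ, FF' (t, x)) = H t2 - H t1 :=
    intervalIntegral.integral_eq_sub_of_hasDerivAt (fun t _ => hHd t)
      (hcFF'int.intervalIntegrable t1 t2)
  -- left-hand side
  have intN : ∀ t, Integrable (fun x => normF2 Γ t x * φ x ^ 2)
      (volume : Measure (Fin n → ℝ)) := by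
    intro t
    apply integrable_of_cont_supp _ hK (fun x hx => by simp [φ0 x hx])
    exact Continuous.mul (continuous_finset_sum _ fun i _ => continuous_finset_sum _ fun j _ =>
      minner_cont ((cont_curv hG).comp (Continuous.prodMk_right t))
        ((cont_curv hG).comp (Continuous.prodMk_right t))) (hφcont.pow 2)
  have hHeq : ∀ t, H t = 1 / 4 * ∫ x : Fin n → ℝ, normF2 Γ t x * φ x ^ 2 := by
    intro t
    rw [hHdef]
    simp only
    rw [← integral_const_mul]
    congr 1; funext x
    rw [hFFdef]; ring
  have hLHS : 1 / 4 * ∫ x : Fin n → ℝ, (normF2 Γ t1 x - normF2 Γ t2 x) * φ x ^ 2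
      = H t1 - H t2 := by
    have e1 : (fun x : Fin n → ℝ => (normF2 Γ t1 x - normF2 Γ t2 x) * φ x ^ 2)
        = fun x => normF2 Γ t1 x * φ x ^ 2 - normF2 Γ t2 x * φ x ^ 2 :=
      funext fun x => by ring
    rw [e1, integral_sub (intN t1) (intN t2), hHeq t1, hHeq t2]
    ring
  have hRHS : (∫ t in Icc t1 t2, ∫ x : Fin n → ℝ, RR (t, x)) = H t1 - H t2 := by
    rw [integral_Icc_eq_integral_Ioc, ← intervalIntegral.integral_of_le ht]
    have e : ∫ t in t1..t2, (∫ x : Fin n → ℝ, RR (t, x))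
        = ∫ t in t1..t2, -(∫ x : Fin n → ℝ, FF' (t, x)) := by
      apply intervalIntegral.integral_congr
      intro t htt
      show (∫ x : Fin n → ℝ, RR (t, x)) = -(∫ x : Fin n → ℝ, FF' (t, x))
      rw [key t (by rwa [uIcc_of_le ht] at htt)]
      ring
    rw [e, intervalIntegral.integral_neg, hFTC]
    ring
  exact hLHS.trans hRHS.symm

end
end

section
/- (Closedness of the concentration set.) Let ε₀ > 0, E > 0, and let {Γ^i} be a sequence of smooth solutions of the Yang–Mills flow on ℝⁿ × [−1,0], each with spatial support contained in a fixed compact set for all times, and with sup_{i,t} (1/2)∫_{ℝⁿ} |F^i_t|² dx ≤ E. For z = (x,t) ∈ ℝⁿ × (−1,0] and r > 0 define Φ^i_z(r) := Φ_z( min{r, √(1+t)} ; Γ^i ). Then the set Σ := ⋂_{r>0} { z ∈ ℝⁿ × (−1,0] : liminf_{i→∞} Φ^i_z(r) ≥ ε₀ } is a closed subset of ℝⁿ × (−1,0]. -/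
open MeasureTheory Filter Set
open scoped ContDiff ENNReal

noncomputable section

-- Auxiliary lemmas


lemma normF2_nonneg {n k : ℕ} (Γ : Conn n k) (t : ℝ) (x : Fin n → ℝ) :
    0 ≤ normF2 Γ t x := by
  unfold normF2 msq minner
  apply Finset.sum_nonneg; intro i _
  apply Finset.sum_nonneg; intro j _
  apply Finset.sum_nonneg; intro a _
  apply Finset.sum_nonneg; intro b _
  exact mul_self_nonneg _

lemma gauss_continuous {n : ℕ} (z0 : (Fin n → ℝ) × ℝ) (t : ℝ) :
    Continuous (fun x => gauss z0 x t) := by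
  unfold gauss
  apply continuous_const.mul
  apply Real.continuous_exp.comp
  apply Continuous.div_const
  apply Continuous.neg
  exact continuous_finset_sum _ (fun i _ => (((continuous_apply i).sub continuous_const).pow 2))

lemma gauss_nonneg {n : ℕ} (z0 : (Fin n → ℝ) × ℝ) (x : Fin n → ℝ) (t : ℝ)
    (h : 0 < z0.2 - t) : 0 ≤ gauss z0 x t := by
  have h1 : (0:ℝ) < 4 * Real.pi * (z0.2 - t) := by
    have := Real.pi_pos; nlinarith
  exact mul_nonneg (Real.rpow_pos_of_pos h1 _).le (Real.exp_nonneg _)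

lemma normF2_continuous {n k : ℕ} {Γ : Conn n k} (hsm : IsSmoothConn Γ) (t : ℝ) :
    Continuous (fun x => normF2 Γ t x) := by
  have hΓ : ∀ j : Fin n, ContDiff ℝ ∞ (fun y : Fin n → ℝ => Γ t y j) := by
    intro j
    have h1 := hsm.1.comp (ContDiff.prodMk (contDiff_const (c := t)) contDiff_id)
    exact ((ContinuousLinearMap.proj (R := ℝ) (φ := fun _ : Fin n => Mat k) j).contDiff).comp h1
  have hpd : ∀ i j : Fin n, Continuous (fun x => pd (fun y => Γ t y j) x i) := by
    intro i j
    exact ((hΓ j).continuous_fderiv (by norm_num)).clm_apply continuous_const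
  have hΓc : ∀ j : Fin n, Continuous (fun x => Γ t x j) := fun j => (hΓ j).continuous
  have hcurv : ∀ i j : Fin n, Continuous (fun x => curv Γ t x i j) := by
    intro i j
    unfold curv mbra mmul
    apply (((hpd i j).sub (hpd j i)).add _)
    apply Continuous.sub <;>
    · apply continuous_pi; intro a; apply continuous_pi; intro b
      apply continuous_finset_sum; intro l _
      exact Continuous.mul
        ((continuous_apply _).comp ((continuous_apply _).comp (hΓc _)))
        ((continuous_apply _).comp ((continuous_apply _).comp (hΓc _)))
  unfold normF2 msq minner
  apply continuous_finset_sum; intro i _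
  apply continuous_finset_sum; intro j _
  apply continuous_finset_sum; intro a _
  apply continuous_finset_sum; intro b _
  exact Continuous.mul
    ((continuous_apply _).comp ((continuous_apply _).comp (hcurv i j)))
    ((continuous_apply _).comp ((continuous_apply _).comp (hcurv i j)))

lemma normF2_zero_of_not_mem {n k : ℕ} {Γ : Conn n k} {K : Set (Fin n → ℝ)}
    (hKc : IsClosed K) (hsupp : SuppIn Γ K) (t : ℝ) {x : Fin n → ℝ} (hx : x ∉ K) :
    normF2 Γ t x = 0 := by
  have hcurv : ∀ i j : Fin n, curv Γ t x i j = 0 := by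
    intro i j
    have hev : ∀ j' : Fin n, (fun y => Γ t y j') =ᶠ[nhds x] (fun _ => (0 : Mat k)) := by
      intro j'
      filter_upwards [hKc.isOpen_compl.mem_nhds hx] with y hy
      rw [hsupp t y hy]; rfl
    have hpd : ∀ i' j' : Fin n, pd (fun y => Γ t y j') x i' = 0 := by
      intro i' j'
      unfold pd
      rw [(hev j').fderiv_eq, fderiv_fun_const]
      rfl
    have hΓx : Γ t x = 0 := hsupp t x hx
    unfold curv
    rw [hpd, hpd, hΓx]
    show (0 : Mat k) - 0 + mbra 0 0 = 0
    have : mbra (0 : Mat k) 0 = 0 := by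
      unfold mbra mmul
      funext a b
      simp
    rw [this]; simp
  unfold normF2
  apply Finset.sum_eq_zero; intro i _
  apply Finset.sum_eq_zero; intro j _
  rw [hcurv i j]
  unfold msq minner
  apply Finset.sum_eq_zero; intro a _
  apply Finset.sum_eq_zero; intro b _
  simp [Pi.zero_apply]

lemma normF2_mul_integrable {n k : ℕ} {Γ : Conn n k} {K : Set (Fin n → ℝ)}
    (hsm : IsSmoothConn Γ) (hK : IsCompact K) (hsupp : SuppIn Γ K) (t : ℝ)
    {g : (Fin n → ℝ) → ℝ} (hg : Continuous g) :
    Integrable (fun x => normF2 Γ t x * g x) := by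
  apply Continuous.integrable_of_hasCompactSupport ((normF2_continuous hsm t).mul hg)
  apply HasCompactSupport.intro hK
  intro x hx
  show normF2 Γ t x * g x = 0
  rw [normF2_zero_of_not_mem hK.isClosed hsupp t hx, zero_mul]

lemma liminf_cmul (c : ℝ) (hc : 0 < c) (u : ℕ → ℝ) (M : ℝ) (h0 : ∀ i, 0 ≤ u i)
    (hM : ∀ i, u i ≤ M) :
    liminf (fun i => c * u i) atTop = c * liminf u atTop := by
  have h1 : atTop.IsBoundedUnder (· ≥ ·) u := Filter.isBoundedUnder_of ⟨0, h0⟩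
  have h2 : atTop.IsBoundedUnder (· ≤ ·) u := Filter.isBoundedUnder_of ⟨M, hM⟩
  have := ((OrderIso.mulLeft₀ c hc).liminf_apply (u := u) h1 h2.isCoboundedUnder_ge
    (Filter.isBoundedUnder_of ⟨0, fun i => by
      exact mul_nonneg hc.le (h0 i)⟩)
    (Filter.isBoundedUnder_of ⟨c*M, fun i => by
      exact mul_le_mul_of_nonneg_left (hM i) hc.le⟩).isCoboundedUnder_ge).symm
  exact this

set_option maxHeartbeats 2000000 in
/-- (Closedness of the concentration set.) For a sequence of smooth,
compactly supported solutions of Yang–Mills flow on `ℝⁿ × [−1,0]` with uniformly bounded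
energy, the concentration set
`Σ = ⋂_{r>0} {z : liminf_i Φ^i_z(r) ≥ ε₀}` is a closed subset of `ℝⁿ × (−1,0]`. -/
theorem concentration_set_closed
    (n k : ℕ) (hn : 2 ≤ n) (hk : 1 ≤ k) (ε0 E : ℝ) (hε0 : 0 < ε0) (hE : 0 < E)
    (Γi : ℕ → Conn n k)
    (hsm : ∀ i, IsSmoothConn (Γi i))
    (hflow : ∀ i, IsYMFlowOn (Γi i) (Icc (-1) 0))
    (K : Set (Fin n → ℝ)) (hK : IsCompact K) (hsupp : ∀ i, SuppIn (Γi i) K)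
    (hen : ∀ i, ∀ t ∈ Icc (-1 : ℝ) 0, 1 / 2 * ∫ x : Fin n → ℝ, normF2 (Γi i) t x ≤ E) :
    ∃ C : Set ((Fin n → ℝ) × ℝ), IsClosed C ∧
      {z : (Fin n → ℝ) × ℝ | z.2 ∈ Ioc (-1 : ℝ) 0 ∧
          ∀ r : ℝ, 0 < r →
            ε0 ≤ liminf (fun i => Phi (Γi i) z (min r (Real.sqrt (1 + z.2)))) atTop}
        = C ∩ {z : (Fin n → ℝ) × ℝ | z.2 ∈ Ioc (-1 : ℝ) 0} := by
  classical
  refine ⟨closure {z : (Fin n → ℝ) × ℝ | z.2 ∈ Ioc (-1 : ℝ) 0 ∧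
      ∀ r : ℝ, 0 < r →
        ε0 ≤ liminf (fun i => Phi (Γi i) z (min r (Real.sqrt (1 + z.2)))) atTop},
    isClosed_closure, ?_⟩
  apply Subset.antisymm
  · intro z hz
    exact ⟨subset_closure hz, hz.1⟩
  · rintro z ⟨hzc, hz2⟩
    obtain ⟨w, hwmem, hwt⟩ := mem_closure_iff_seq_limit.1 hzc
    refine ⟨hz2, fun r hr => ?_⟩
    obtain ⟨ht1, ht0⟩ := hz2
    set ρ : ℝ := min r (Real.sqrt (1 + z.2)) with hρdef
    have hsq : Real.sqrt (1 + z.2) ^ 2 = 1 + z.2 := Real.sq_sqrt (by linarith)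
    have hρ : 0 < ρ := lt_min hr (Real.sqrt_pos.2 (by linarith))
    have hρ2 : ρ ^ 2 ≤ 1 + z.2 := by
      calc ρ ^ 2 ≤ Real.sqrt (1 + z.2) ^ 2 :=
            pow_le_pow_left₀ hρ.le (min_le_right _ _) 2
        _ = 1 + z.2 := hsq
    have hρp : (0:ℝ) < ρ ^ 2 := pow_pos hρ 2
    have hs : z.2 - ρ ^ 2 ∈ Icc (-1 : ℝ) 0 := ⟨by linarith, by linarith⟩
    -- quadratic form centered at z.1
    set Q : (Fin n → ℝ) → ℝ := fun x => ∑ i, (x i - z.1 i) ^ 2 with hQdef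
    have hQc : Continuous Q :=
      continuous_finset_sum _ fun i _ => ((continuous_apply i).sub continuous_const).pow 2
    have hQ0 : ∀ x, 0 ≤ Q x := fun x => Finset.sum_nonneg fun i _ => sq_nonneg _
    obtain ⟨b, hb0, hbK⟩ : ∃ b, 0 ≤ b ∧ ∀ x ∈ K, Q x ≤ b := by
      obtain ⟨b0, hb0'⟩ := (hK.image hQc).bddAbove
      exact ⟨max b0 0, le_max_right _ _, fun x hx =>
        le_trans (hb0' (mem_image_of_mem Q hx)) (le_max_left _ _)⟩
    -- kernel constants at z
    set P : ℝ := (4 * Real.pi * ρ ^ 2) ^ (-(n : ℝ) / 2) with hPdef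
    have h4ρ : (0:ℝ) < 4 * Real.pi * ρ ^ 2 := by positivity
    have hP : 0 < P := Real.rpow_pos_of_pos h4ρ _
    have hgz : ∀ x, gauss z x (z.2 - ρ ^ 2) = P * Real.exp (-(Q x) / (4 * ρ ^ 2)) := by
      intro x
      have h1 : z.2 - (z.2 - ρ ^ 2) = ρ ^ 2 := by ring
      simp only [gauss, h1, hPdef, hQdef]
    have hgz0 : ∀ x, 0 ≤ gauss z x (z.2 - ρ ^ 2) := by
      intro x; rw [hgz x]; positivity
    have hgzle : ∀ x, gauss z x (z.2 - ρ ^ 2) ≤ P := by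
      intro x; rw [hgz x]
      have : Real.exp (-(Q x) / (4 * ρ ^ 2)) ≤ 1 := by
        rw [Real.exp_le_one_iff]
        apply div_nonpos_of_nonpos_of_nonneg (by linarith [hQ0 x]) (by positivity)
      nlinarith [hP]
    -- integrability and bounds for Phi at z
    have hF0 : ∀ i x, 0 ≤ normF2 (Γi i) (z.2 - ρ ^ 2) x := fun i x => normF2_nonneg _ _ _
    have hInt : ∀ (i : ℕ) (g : (Fin n → ℝ) → ℝ), Continuous g →
        Integrable (fun x => normF2 (Γi i) (z.2 - ρ ^ 2) x * g x) :=
      fun i g hg => normF2_mul_integrable (hsm i) hK (hsupp i) _ hg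
    have hIntF : ∀ i, Integrable (fun x => normF2 (Γi i) (z.2 - ρ ^ 2) x) := by
      intro i
      have := hInt i (fun _ => 1) continuous_const
      simpa using this
    have hEbound : ∀ i, (∫ x, normF2 (Γi i) (z.2 - ρ ^ 2) x) ≤ 2 * E := by
      intro i
      have := hen i _ hs
      linarith
    set M : ℝ := ρ ^ 4 / 2 * (P * (2 * E)) with hMdef
    have hPhiz0 : ∀ i, 0 ≤ Phi (Γi i) z ρ := by
      intro i
      apply mul_nonneg (by positivity)
      apply integral_nonneg
      intro x
      exact mul_nonneg (hF0 i x) (hgz0 x)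
    have hPhizM : ∀ i, Phi (Γi i) z ρ ≤ M := by
      intro i
      have h1 : (∫ x, normF2 (Γi i) (z.2 - ρ ^ 2) x * gauss z x (z.2 - ρ ^ 2))
          ≤ ∫ x, P * normF2 (Γi i) (z.2 - ρ ^ 2) x := by
        apply integral_mono (hInt i _ (gauss_continuous z _)) ((hIntF i).const_mul P)
        intro x
        calc normF2 (Γi i) (z.2 - ρ ^ 2) x * gauss z x (z.2 - ρ ^ 2)
            ≤ normF2 (Γi i) (z.2 - ρ ^ 2) x * P :=
              mul_le_mul_of_nonneg_left (hgzle x) (hF0 i x)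
          _ = P * normF2 (Γi i) (z.2 - ρ ^ 2) x := by ring
      rw [integral_const_mul] at h1
      have h2 : P * (∫ x, normF2 (Γi i) (z.2 - ρ ^ 2) x) ≤ P * (2 * E) :=
        mul_le_mul_of_nonneg_left (hEbound i) hP.le
      show ρ ^ 4 / 2 * _ ≤ M
      rw [hMdef]
      have : (0:ℝ) ≤ ρ ^ 4 / 2 := by positivity
      exact mul_le_mul_of_nonneg_left (h1.trans h2) this
    set L : ℝ := liminf (fun i => Phi (Γi i) z ρ) atTop with hLdef
    show ε0 ≤ L
    -- sequence data
    have hwt1 : Tendsto (fun j => (w j).1) atTop (nhds z.1) := (continuous_fst.tendsto z).comp hwt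
    have hwt2 : Tendsto (fun j => (w j).2) atTop (nhds z.2) := (continuous_snd.tendsto z).comp hwt
    set v : ℕ → ℝ := fun j => ρ ^ 2 + ((w j).2 - z.2) with hvdef
    set D : ℕ → ℝ := fun j => Q ((w j).1) with hDdef
    set ee : ℕ → ℝ := fun j =>
      b * max 0 (1 / (4 * ρ ^ 2) - 1 / (4 * v j)) +
        2 * Real.sqrt b * Real.sqrt (D j) / (4 * v j) with heedef
    set Pj : ℕ → ℝ := fun j => (4 * Real.pi * v j) ^ (-(n : ℝ) / 2) with hPjdef
    set A : ℕ → ℝ := fun j => v j ^ 2 / ρ ^ 4 * (Pj j / P * Real.exp (ee j)) with hAdef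
    have hv : Tendsto v atTop (nhds (ρ ^ 2)) := by
      have h1 : Tendsto (fun j => ρ ^ 2 + ((w j).2 - z.2)) atTop (nhds (ρ ^ 2 + (z.2 - z.2))) :=
        tendsto_const_nhds.add (hwt2.sub tendsto_const_nhds)
      simpa [hvdef] using h1
    have hD : Tendsto D atTop (nhds 0) := by
      have h0 : Q z.1 = 0 := by simp [hQdef]
      have h1 := (hQc.tendsto z.1).comp hwt1
      rw [h0] at h1
      exact h1
    have hPj : Tendsto Pj atTop (nhds P) := by
      have h1 : Tendsto (fun j => 4 * Real.pi * v j) atTop (nhds (4 * Real.pi * ρ ^ 2)) :=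
        tendsto_const_nhds.mul hv
      exact h1.rpow_const (Or.inl h4ρ.ne')
    have hee : Tendsto ee atTop (nhds 0) := by
      have h1 : Tendsto (fun j => 1 / (4 * v j)) atTop (nhds (1 / (4 * ρ ^ 2))) :=
        tendsto_const_nhds.div (tendsto_const_nhds.mul hv) (by positivity)
      have h2 : Tendsto (fun j => max 0 (1 / (4 * ρ ^ 2) - 1 / (4 * v j))) atTop
          (nhds (max 0 (1 / (4 * ρ ^ 2) - 1 / (4 * ρ ^ 2)))) :=
        tendsto_const_nhds.max (tendsto_const_nhds.sub h1)
      have h3 : Tendsto (fun j => Real.sqrt (D j)) atTop (nhds (Real.sqrt 0)) :=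
        (Real.continuous_sqrt.tendsto 0).comp hD
      have h4 : Tendsto ee atTop (nhds
          (b * max 0 (1 / (4 * ρ ^ 2) - 1 / (4 * ρ ^ 2)) +
            2 * Real.sqrt b * Real.sqrt 0 / (4 * ρ ^ 2))) :=
        (tendsto_const_nhds.mul h2).add
          ((tendsto_const_nhds.mul h3).div (tendsto_const_nhds.mul hv) (by positivity))
      simpa using h4
    have hA : Tendsto A atTop (nhds 1) := by
      have h1 : Tendsto A atTop (nhds
          ((ρ ^ 2) ^ 2 / ρ ^ 4 * (P / P * Real.exp 0))) :=
        ((hv.pow 2).div_const _).mul ((hPj.div_const _).mul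
          ((Real.continuous_exp.tendsto 0).comp hee))
      have h2 : (ρ ^ 2) ^ 2 / ρ ^ 4 * (P / P * Real.exp 0) = 1 := by
        rw [Real.exp_zero, div_self hP.ne']
        field_simp
      rwa [h2] at h1
    have hvpos : ∀ᶠ j in atTop, 0 < v j := hv.eventually (eventually_gt_nhds hρp)
    -- eventual inequality
    have hev : ∀ᶠ j in atTop, ε0 ≤ A j * L := by
      filter_upwards [hvpos] with j hvj
      obtain ⟨hwj2, hwjΦ⟩ := hwmem j
      have hρj : (0:ℝ) < Real.sqrt (v j) := Real.sqrt_pos.2 hvj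
      have hρj2 : Real.sqrt (v j) ^ 2 = v j := Real.sq_sqrt hvj.le
      have hmin : min (Real.sqrt (v j)) (Real.sqrt (1 + (w j).2)) = Real.sqrt (v j) := by
        apply min_eq_left
        apply Real.sqrt_le_sqrt
        simp only [hvdef]
        linarith
      have h1 : ε0 ≤ liminf (fun i => Phi (Γi i) (w j) (Real.sqrt (v j))) atTop := by
        have := hwjΦ (Real.sqrt (v j)) hρj
        rwa [hmin] at this
      have htime : (w j).2 - Real.sqrt (v j) ^ 2 = z.2 - ρ ^ 2 := by
        rw [hρj2]; simp only [hvdef]; ring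
      set Cj : ℝ := Pj j / P * Real.exp (ee j) with hCjdef
      have hPjpos : 0 < Pj j := by
        simp only [hPjdef]
        exact Real.rpow_pos_of_pos (by positivity) _
      have hCj : 0 < Cj := mul_pos (div_pos hPjpos hP) (Real.exp_pos _)
      -- kernel comparison on K
      have hker : ∀ x ∈ K, gauss (w j) x (z.2 - ρ ^ 2) ≤ Cj * gauss z x (z.2 - ρ ^ 2) := by
        intro x hx
        have hwz : (w j).2 - (z.2 - ρ ^ 2) = v j := by simp only [hvdef]; ring
        have hD0 : 0 ≤ D j := by simp only [hDdef]; exact hQ0 _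
        have hQj : Q x - 2 * Real.sqrt b * Real.sqrt (D j) ≤ ∑ i, (x i - (w j).1 i) ^ 2 := by
          have hexp : (∑ i, (x i - (w j).1 i) ^ 2) =
              Q x - 2 * (∑ i, (x i - z.1 i) * ((w j).1 i - z.1 i)) + D j := by
            simp only [hQdef, hDdef, Finset.mul_sum, ← Finset.sum_sub_distrib,
              ← Finset.sum_add_distrib]
            apply Finset.sum_congr rfl
            intro i _
            ring
          have hT : (∑ i, (x i - z.1 i) * ((w j).1 i - z.1 i)) ≤
              Real.sqrt b * Real.sqrt (D j) := by
            rcases le_or_gt (∑ i, (x i - z.1 i) * ((w j).1 i - z.1 i)) 0 with h | h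
            · exact h.trans (by positivity)
            · have hcs := Finset.sum_mul_sq_le_sq_mul_sq Finset.univ
                (fun i => x i - z.1 i) (fun i => (w j).1 i - z.1 i)
              have h5 : (∑ i, (x i - z.1 i) * ((w j).1 i - z.1 i)) ≤
                  Real.sqrt (Q x * D j) := by
                rw [← Real.sqrt_sq h.le]
                apply Real.sqrt_le_sqrt
                simpa [hQdef, hDdef] using hcs
              calc (∑ i, (x i - z.1 i) * ((w j).1 i - z.1 i))
                  ≤ Real.sqrt (Q x * D j) := h5
                _ = Real.sqrt (Q x) * Real.sqrt (D j) := Real.sqrt_mul (hQ0 x) _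
                _ ≤ Real.sqrt b * Real.sqrt (D j) :=
                    mul_le_mul_of_nonneg_right
                      (Real.sqrt_le_sqrt (hbK x hx)) (Real.sqrt_nonneg _)
          rw [hexp]
          linarith
        have hβ : (0:ℝ) < 4 * v j := by linarith
        have hf2 : Q x * (1 / (4 * ρ ^ 2)) - Q x * (1 / (4 * v j)) ≤
            b * max 0 (1 / (4 * ρ ^ 2) - 1 / (4 * v j)) := by
          rcases le_or_gt (1 / (4 * ρ ^ 2) - 1 / (4 * v j)) 0 with h | h
          · have h6 : Q x * (1 / (4 * ρ ^ 2) - 1 / (4 * v j)) ≤ 0 :=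
              mul_nonpos_of_nonneg_of_nonpos (hQ0 x) h
            rw [max_eq_left h]
            nlinarith
          · rw [max_eq_right h.le]
            have h6 : Q x * (1 / (4 * ρ ^ 2) - 1 / (4 * v j)) ≤
                b * (1 / (4 * ρ ^ 2) - 1 / (4 * v j)) :=
              mul_le_mul_of_nonneg_right (hbK x hx) h.le
            nlinarith
        have hexple : -(∑ i, (x i - (w j).1 i) ^ 2) / (4 * v j) ≤
            ee j + -(Q x) / (4 * ρ ^ 2) := by
          have e1 : -(∑ i, (x i - (w j).1 i) ^ 2) / (4 * v j) ≤
              -(Q x - 2 * Real.sqrt b * Real.sqrt (D j)) / (4 * v j) :=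
            (div_le_div_iff_of_pos_right hβ).2 (by linarith)
          have e2 : -(Q x - 2 * Real.sqrt b * Real.sqrt (D j)) / (4 * v j) =
              -(Q x) * (1 / (4 * v j)) + 2 * Real.sqrt b * Real.sqrt (D j) / (4 * v j) := by
            ring
          have e3 : -(Q x) * (1 / (4 * v j)) ≤
              b * max 0 (1 / (4 * ρ ^ 2) - 1 / (4 * v j)) + -(Q x) / (4 * ρ ^ 2) := by
            have : -(Q x) / (4 * ρ ^ 2) = -(Q x) * (1 / (4 * ρ ^ 2)) := by ring
            rw [this]
            nlinarith [hf2]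
          simp only [heedef]
          linarith [e1, e2.le, e3]
        -- assemble kernel bound
        have hgw : gauss (w j) x (z.2 - ρ ^ 2) =
            Pj j * Real.exp (-(∑ i, (x i - (w j).1 i) ^ 2) / (4 * v j)) := by
          simp only [gauss, hwz, hPjdef]
        have hrhs : Cj * gauss z x (z.2 - ρ ^ 2) =
            Pj j * Real.exp (ee j + -(Q x) / (4 * ρ ^ 2)) := by
          have hsplit : Real.exp (ee j + -Q x / (4 * ρ ^ 2)) =
              Real.exp (ee j) * Real.exp (-Q x / (4 * ρ ^ 2)) := Real.exp_add _ _
          rw [hgz x, hCjdef, hsplit]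
          generalize Real.exp (ee j) = a
          generalize Real.exp (-Q x / (4 * ρ ^ 2)) = c
          field_simp
        rw [hgw, hrhs]
        exact mul_le_mul_of_nonneg_left (Real.exp_le_exp.2 hexple) hPjpos.le
      -- per-i comparison of the entropies
      have key : ∀ i, Phi (Γi i) (w j) (Real.sqrt (v j)) ≤ A j * Phi (Γi i) z ρ := by
        intro i
        have hptw : ∀ x, normF2 (Γi i) (z.2 - ρ ^ 2) x * gauss (w j) x (z.2 - ρ ^ 2) ≤
            Cj * (normF2 (Γi i) (z.2 - ρ ^ 2) x * gauss z x (z.2 - ρ ^ 2)) := by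
          intro x
          by_cases hx : x ∈ K
          · calc normF2 (Γi i) (z.2 - ρ ^ 2) x * gauss (w j) x (z.2 - ρ ^ 2)
                ≤ normF2 (Γi i) (z.2 - ρ ^ 2) x * (Cj * gauss z x (z.2 - ρ ^ 2)) :=
                  mul_le_mul_of_nonneg_left (hker x hx) (hF0 i x)
              _ = Cj * (normF2 (Γi i) (z.2 - ρ ^ 2) x * gauss z x (z.2 - ρ ^ 2)) := by ring
          · rw [normF2_zero_of_not_mem hK.isClosed (hsupp i) _ hx]
            simp
        have hint_le : (∫ x, normF2 (Γi i) (z.2 - ρ ^ 2) x * gauss (w j) x (z.2 - ρ ^ 2)) ≤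
            Cj * ∫ x, normF2 (Γi i) (z.2 - ρ ^ 2) x * gauss z x (z.2 - ρ ^ 2) := by
          rw [← integral_const_mul]
          exact integral_mono (hInt i _ (gauss_continuous (w j) _))
            ((hInt i _ (gauss_continuous z _)).const_mul Cj) hptw
        have h4 : Real.sqrt (v j) ^ 4 = v j ^ 2 := by
          rw [show Real.sqrt (v j) ^ 4 = (Real.sqrt (v j) ^ 2) ^ 2 by ring, hρj2]
        have hPhiw : Phi (Γi i) (w j) (Real.sqrt (v j)) =
            v j ^ 2 / 2 * ∫ x, normF2 (Γi i) (z.2 - ρ ^ 2) x * gauss (w j) x (z.2 - ρ ^ 2) := by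
          simp only [Phi, htime, h4]
        have hPhizz : Phi (Γi i) z ρ =
            ρ ^ 4 / 2 * ∫ x, normF2 (Γi i) (z.2 - ρ ^ 2) x * gauss z x (z.2 - ρ ^ 2) := rfl
        rw [hPhiw, hPhizz]
        have hAj : A j * (ρ ^ 4 / 2 *
              ∫ x, normF2 (Γi i) (z.2 - ρ ^ 2) x * gauss z x (z.2 - ρ ^ 2)) =
            v j ^ 2 / 2 * (Cj *
              ∫ x, normF2 (Γi i) (z.2 - ρ ^ 2) x * gauss z x (z.2 - ρ ^ 2)) := by
          simp only [hAdef, hCjdef]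
          field_simp
        rw [hAj]
        exact mul_le_mul_of_nonneg_left hint_le (by positivity)
      -- liminf chain
      have hAj0 : 0 < A j := by
        simp only [hAdef]
        exact mul_pos (div_pos (pow_pos hvj 2) (pow_pos hρ 4)) hCj
      have hbd1 : ∀ i, Phi (Γi i) (w j) (Real.sqrt (v j)) ≤ A j * M := fun i =>
        (key i).trans (mul_le_mul_of_nonneg_left (hPhizM i) hAj0.le)
      have hPhiw0 : ∀ i, 0 ≤ Phi (Γi i) (w j) (Real.sqrt (v j)) := by
        intro i
        apply mul_nonneg (by positivity)
        apply integral_nonneg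
        intro x
        apply mul_nonneg (normF2_nonneg _ _ _)
        apply gauss_nonneg
        have h7 : (w j).2 - ((w j).2 - Real.sqrt (v j) ^ 2) = v j := by rw [hρj2]; ring
        show (0:ℝ) < (w j).2 - ((w j).2 - Real.sqrt (v j) ^ 2)
        rw [h7]; exact hvj
      have lchain : liminf (fun i => Phi (Γi i) (w j) (Real.sqrt (v j))) atTop ≤
          liminf (fun i => A j * Phi (Γi i) z ρ) atTop :=
        liminf_le_liminf (Eventually.of_forall key)
          (Filter.isBoundedUnder_of ⟨0, hPhiw0⟩)
          (Filter.isBoundedUnder_of ⟨A j * M,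
            fun i => mul_le_mul_of_nonneg_left (hPhizM i) hAj0.le⟩).isCoboundedUnder_ge
      have leq : liminf (fun i => A j * Phi (Γi i) z ρ) atTop = A j * L :=
        liminf_cmul (A j) hAj0 _ M hPhiz0 hPhizM
      calc ε0 ≤ liminf (fun i => Phi (Γi i) (w j) (Real.sqrt (v j))) atTop := h1
        _ ≤ liminf (fun i => A j * Phi (Γi i) z ρ) atTop := lchain
        _ = A j * L := leq
    have hALtend : Tendsto (fun j => A j * L) atTop (nhds L) := by
      have := hA.mul (tendsto_const_nhds (x := L))
      simpa using this
    exact ge_of_tendsto hALtend hev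

end
end

section
/- Let n ≥ 3, let f : ℝⁿ × ℝ → [0,∞) be Lebesgue integrable, and let Σ ⊂ ℝⁿ × ℝ be a closed set of Lebesgue measure zero. Then 𝒫^{n−2}( { z ∈ Σ : limsup_{R→0⁺} R^{2−n} ∫_{P_R(z)} f(x,t) dx dt > 0 } ) = 0; in particular, for 𝒫^{n−2}-almost every z ∈ Σ, lim_{R→0⁺} R^{2−n} ∫_{P_R(z)} f(x,t) dx dt = 0. -/
open MeasureTheory Filter Set Topology
open scoped ENNReal

noncomputable section

/-- `ℝⁿ × ℝ` equipped with the parabolic metric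
`ϱ((x,t),(y,s)) = max {|x−y|, √|t−s|}`. -/
def PM (n : ℕ) : Type := EuclideanSpace ℝ (Fin n) × ℝ

private lemma sqrt_add_le (a b : ℝ) (ha : 0 ≤ a) (hb : 0 ≤ b) :
    Real.sqrt (a + b) ≤ Real.sqrt a + Real.sqrt b := by
  have h : a + b ≤ (Real.sqrt a + Real.sqrt b) ^ 2 := by
    nlinarith [Real.sq_sqrt ha, Real.sq_sqrt hb, Real.sqrt_nonneg a, Real.sqrt_nonneg b]
  calc Real.sqrt (a + b) ≤ Real.sqrt ((Real.sqrt a + Real.sqrt b) ^ 2) := Real.sqrt_le_sqrt h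
    _ = Real.sqrt a + Real.sqrt b := Real.sqrt_sq (by positivity)

noncomputable instance PM.metricSpace (n : ℕ) : MetricSpace (PM n) where
  dist p q := max (dist p.1 q.1) (Real.sqrt (dist p.2 q.2))
  dist_self p := by simp
  dist_comm p q := by simp [dist_comm]
  dist_triangle p q r := by
    refine max_le ?_ ?_
    · exact (dist_triangle p.1 q.1 r.1).trans
        (add_le_add (le_max_left _ _) (le_max_left _ _))
    · refine le_trans (Real.sqrt_le_sqrt (dist_triangle p.2 q.2 r.2)) ?_
      exact le_trans (sqrt_add_le _ _ dist_nonneg dist_nonneg)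
        (add_le_add (le_max_right _ _) (le_max_right _ _))
  eq_of_dist_eq_zero := by
    intro p q h
    have h1 : dist p.1 q.1 = 0 :=
      le_antisymm (h ▸ le_max_left _ _) dist_nonneg
    have h2 : Real.sqrt (dist p.2 q.2) = 0 :=
      le_antisymm (h ▸ le_max_right _ _) (Real.sqrt_nonneg _)
    have h2' : dist p.2 q.2 = 0 :=
      le_antisymm (Real.sqrt_eq_zero'.mp h2) dist_nonneg
    have e1 : p.1 = q.1 := dist_eq_zero.mp h1
    have e2 : p.2 = q.2 := dist_eq_zero.mp h2'
    exact Prod.ext e1 e2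

noncomputable instance PM.measurableSpace (n : ℕ) : MeasurableSpace (PM n) := borel _

instance PM.borelSpace (n : ℕ) : BorelSpace (PM n) := ⟨rfl⟩

/-- The identity map from `ℝⁿ × ℝ` (with its standard structures) to the parabolic
metric space `PM n`; `𝒫^ℓ(Ω)` is formalized as `μH[ℓ] (toPM n '' Ω)`. -/
def toPM (n : ℕ) : EuclideanSpace ℝ (Fin n) × ℝ → PM n := fun p => p

/-- The parabolic ball `P_r(z₀) = {(x,t) : |x−x₀| < r, |t−t₀| < r²}`. -/
def pball {n : ℕ} (z : EuclideanSpace ℝ (Fin n) × ℝ) (r : ℝ) :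
    Set (EuclideanSpace ℝ (Fin n) × ℝ) :=
  {p | dist p.1 z.1 < r ∧ |p.2 - z.2| < r ^ 2}

/-! ### auxiliary lemmas -/

lemma PM.dist_def {n : ℕ} (p q : PM n) :
    dist p q = max (dist p.1 q.1) (Real.sqrt (dist p.2 q.2)) := rfl

lemma mem_pball_iff {n : ℕ} {z p : EuclideanSpace ℝ (Fin n) × ℝ} {r : ℝ} (hr : 0 < r) :
    p ∈ pball z r ↔ dist (toPM n p) (toPM n z) < r := by
  rw [pball, Set.mem_setOf_eq, PM.dist_def, max_lt_iff, Real.sqrt_lt' hr, Real.dist_eq]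
  exact Iff.rfl

lemma image_toPM {n : ℕ} (A : Set (EuclideanSpace ℝ (Fin n) × ℝ)) : toPM n '' A = A :=
  Set.image_id' A

lemma continuous_toPM (n : ℕ) : Continuous (toPM n) := by
  rw [Metric.continuous_iff]
  intro b ε hε
  refine ⟨min ε (ε ^ 2), lt_min hε (by positivity), fun a hab => ?_⟩
  rw [PM.dist_def]
  have h1 : dist a.1 b.1 ≤ dist a b := by rw [Prod.dist_eq]; exact le_max_left _ _
  have h2 : dist a.2 b.2 ≤ dist a b := by rw [Prod.dist_eq]; exact le_max_right _ _
  refine max_lt (lt_of_le_of_lt h1 (hab.trans_le (min_le_left _ _))) ?_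
  rw [Real.sqrt_lt' hε]
  exact lt_of_le_of_lt h2 (hab.trans_le (min_le_right _ _))

instance PM.separableSpace (n : ℕ) : TopologicalSpace.SeparableSpace (PM n) := by
  obtain ⟨D, hDc, hDd⟩ :=
    TopologicalSpace.exists_countable_dense (EuclideanSpace ℝ (Fin n) × ℝ)
  have hsurj : Function.Surjective (toPM n) := fun x => ⟨x, rfl⟩
  exact ⟨⟨toPM n '' D, hDc.image _, hsurj.denseRange.dense_image (continuous_toPM n) hDd⟩⟩

lemma isOpen_pball {n : ℕ} {z : EuclideanSpace ℝ (Fin n) × ℝ} {r : ℝ} :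
    IsOpen (pball z r) := by
  have h1 : IsOpen {p : EuclideanSpace ℝ (Fin n) × ℝ | dist p.1 z.1 < r} :=
    isOpen_lt (continuous_fst.dist continuous_const) continuous_const
  have h2 : IsOpen {p : EuclideanSpace ℝ (Fin n) × ℝ | |p.2 - z.2| < r ^ 2} :=
    isOpen_lt ((continuous_snd.sub continuous_const).abs) continuous_const
  exact h1.inter h2

lemma pball_subset_closedBall {n : ℕ} (z : EuclideanSpace ℝ (Fin n) × ℝ) {r : ℝ} (hr : 0 < r) :
    pball z r ⊆ (Metric.closedBall (toPM n z) r : Set (PM n)) := by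
  intro p hp
  show toPM n p ∈ Metric.closedBall (toPM n z) r
  exact Metric.mem_closedBall.2 (le_of_lt ((mem_pball_iff hr).1 hp))

lemma pball_subset_thickening {n : ℕ} {S : Set (EuclideanSpace ℝ (Fin n) × ℝ)}
    {z : EuclideanSpace ℝ (Fin n) × ℝ} (hz : z ∈ S) {r : ℝ} (hr0 : 0 < r) (hr1 : r ≤ 1) :
    pball z r ⊆ Metric.thickening r S := by
  intro p hp
  rw [Metric.mem_thickening_iff]
  refine ⟨z, hz, ?_⟩
  rw [Prod.dist_eq]
  refine max_lt hp.1 ?_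
  rw [Real.dist_eq]
  calc |p.2 - z.2| < r ^ 2 := hp.2
    _ ≤ r := by nlinarith

lemma ediam_closedBall_le {α : Type*} [PseudoMetricSpace α] (x : α) {r : ℝ} (hr : 0 ≤ r) :
    EMetric.diam (Metric.closedBall x r) ≤ ENNReal.ofReal (2 * r) := by
  rw [← Metric.emetric_closedBall hr, ENNReal.ofReal_mul (by norm_num : (0:ℝ) ≤ 2)]
  simpa [EMetric.diam] using Metric.ediam_closedEBall_le (x := x) (r := ENNReal.ofReal r)

lemma key_null (n : ℕ) (hn : 3 ≤ n) (f : EuclideanSpace ℝ (Fin n) × ℝ → ℝ)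
    (hf0 : ∀ p, 0 ≤ f p) (hfint : Integrable f volume)
    (S : Set (EuclideanSpace ℝ (Fin n) × ℝ)) (hScl : IsClosed S) (hSnull : volume S = 0)
    (ε : ℝ) (hε : 0 < ε) :
    μH[(n : ℝ) - 2] (toPM n ''
      {z | z ∈ S ∧ ∃ᶠ R in nhdsWithin (0:ℝ) (Ioi 0),
        ε < R ^ ((2 : ℝ) - n) * ∫ p in pball z R, f p}) = 0 := by
  classical
  set d : ℝ := (n : ℝ) - 2 with hd_def
  have hn3 : (3 : ℝ) ≤ (n : ℝ) := by exact_mod_cast hn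
  have hd : 0 < d := by rw [hd_def]; linarith
  set E := {z | z ∈ S ∧ ∃ᶠ R in nhdsWithin (0:ℝ) (Ioi 0),
      ε < R ^ ((2 : ℝ) - n) * ∫ p in pball z R, f p} with hE_def
  -- measurable representative of f
  have hfm := hfint.aestronglyMeasurable
  set g := hfm.mk f with hg_def
  have hfg : f =ᵐ[volume] g := hfm.ae_eq_mk
  have hgm : Measurable g := hfm.stronglyMeasurable_mk.measurable
  have hg0 : 0 ≤ᵐ[volume] g := by
    filter_upwards [hfg] with p hp
    rw [← hp]; exact hf0 p
  set μ' := volume.withDensity (fun p => ENNReal.ofReal (g p)) with hμ'_def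
  have hgint : Integrable g volume := hfint.congr hfg
  have hμ'fin : IsFiniteMeasure μ' := by
    constructor
    rw [hμ'_def, withDensity_apply _ MeasurableSet.univ, Measure.restrict_univ,
      ← ofReal_integral_eq_lintegral_ofReal hgint hg0]
    exact ENNReal.ofReal_lt_top
  have hμ'S : μ' S = 0 := withDensity_absolutelyContinuous _ _ hSnull
  have hint_eq : ∀ (z : EuclideanSpace ℝ (Fin n) × ℝ) (r : ℝ),
      ENNReal.ofReal (∫ p in pball z r, f p) = μ' (pball z r) := by
    intro z r
    have hms : MeasurableSet (pball z r) := isOpen_pball.measurableSet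
    have h1 : ∫ p in pball z r, f p = ∫ p in pball z r, g p :=
      integral_congr_ae (ae_restrict_of_ae hfg)
    rw [h1, ofReal_integral_eq_lintegral_ofReal hgint.integrableOn
      (ae_restrict_of_ae hg0), hμ'_def, withDensity_apply _ hms]
  have htend : Tendsto (fun r => μ' (Metric.cthickening r S)) (nhds 0) (nhds 0) := by
    have h := tendsto_measure_cthickening_of_isClosed (μ := μ')
      ⟨1, one_pos, measure_ne_top _ _⟩ hScl
    rwa [hμ'S] at h
  have hεne : (ENNReal.ofReal ε) ≠ 0 := (ENNReal.ofReal_pos.2 hε).ne'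
  have h8top : ((8:ℝ≥0∞) ^ d) ≠ ∞ :=
    (ENNReal.rpow_lt_top_of_nonneg hd.le (by norm_num)).ne
  have h8ne : ((8:ℝ≥0∞) ^ d) ≠ 0 := by
    simp [ENNReal.rpow_eq_zero_iff]
  -- main claim
  have claim : ∀ η : ℝ≥0∞, 0 < η →
      μH[d] (toPM n '' E) ≤ (8:ℝ≥0∞) ^ d * (η / ENNReal.ofReal ε) := by
    intro η hη
    obtain ⟨δ0, hδ0pos, hδ0⟩ : ∃ δ0 > 0, μ' (Metric.cthickening δ0 S) < η := by
      have h1 : ∀ᶠ r in nhdsWithin (0:ℝ) (Ioi 0), μ' (Metric.cthickening r S) < η :=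
        ((htend.mono_left nhdsWithin_le_nhds).eventually_lt_const hη)
      obtain ⟨r, hr1, hr2⟩ := (h1.and eventually_mem_nhdsWithin).exists
      exact ⟨r, hr2, hr1⟩
    -- covering construction for a given small scale ρ
    have hcover : ∀ ρ : ℝ, 0 < ρ → ρ ≤ δ0 → ρ ≤ 1 →
        ∃ t : ℕ → Set (PM n), (toPM n '' E ⊆ ⋃ i, t i) ∧
          (∀ i, EMetric.diam (t i) ≤ ENNReal.ofReal (8 * ρ)) ∧
          ∑' i, EMetric.diam (t i) ^ d ≤ (8:ℝ≥0∞) ^ d * (η / ENNReal.ofReal ε) := by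
      intro ρ hρ0 hρδ hρ1
      set tfam : Set ((EuclideanSpace ℝ (Fin n) × ℝ) × ℝ) :=
        {a | a.1 ∈ E ∧ 0 < a.2 ∧ a.2 < ρ ∧
          ε < a.2 ^ ((2 : ℝ) - n) * ∫ p in pball a.1 a.2, f p} with htfam_def
      obtain ⟨u, hut, hdisj, hcov⟩ :=
        Vitali.exists_disjoint_subfamily_covering_enlargement_closedBall tfam
          (fun a => toPM n a.1) (fun a => a.2) ρ (fun a ha => ha.2.2.1.le) 4 (by norm_num)
      have hucnt : u.Countable := by
        refine hdisj.countable_of_nonempty_interior fun a ha => ?_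
        have h0 : 0 < a.2 := (hut ha).2.1
        exact ⟨toPM n a.1, Metric.ball_subset_interior_closedBall (Metric.mem_ball_self h0)⟩
      obtain ⟨φ, hφ⟩ := Set.countable_iff_exists_injective.1 hucnt
      set t : ℕ → Set (PM n) := fun k =>
        if h : ∃ b : ↥u, φ b = k then
          Metric.closedBall (toPM n h.choose.1.1) (4 * h.choose.1.2) else ∅ with ht_def
      set G : ℕ → Set (EuclideanSpace ℝ (Fin n) × ℝ) := fun k =>
        if h : ∃ b : ↥u, φ b = k then pball h.choose.1.1 h.choose.1.2 else ∅ with hG_def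
      refine ⟨t, ?_, ?_, ?_⟩
      · -- covering
        rintro _ ⟨z, hz, rfl⟩
        obtain ⟨R, hPR, hR0, hRρ⟩ :
            ∃ R : ℝ, (ε < R ^ ((2 : ℝ) - n) * ∫ p in pball z R, f p) ∧ 0 < R ∧ R < ρ := by
          have := (hz.2.and_eventually
            (eventually_mem_nhdsWithin.mono (fun x hx => hx))).and_eventually
            (eventually_nhdsWithin_of_eventually_nhds
              (eventually_lt_nhds hρ0 |>.mono fun x hx => hx))
          obtain ⟨R, ⟨h1, h2⟩, h3⟩ := this.exists
          exact ⟨R, h1, h2, h3⟩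
        have hmem : (z, R) ∈ tfam := ⟨hz, hR0, hRρ, hPR⟩
        obtain ⟨b, hbu, hsub⟩ := hcov (z, R) hmem
        have hzb : toPM n z ∈ Metric.closedBall (toPM n b.1) (4 * b.2) :=
          hsub (Metric.mem_closedBall_self hR0.le)
        refine mem_iUnion.2 ⟨φ ⟨b, hbu⟩, ?_⟩
        have hex : ∃ b' : ↥u, φ b' = φ ⟨b, hbu⟩ := ⟨⟨b, hbu⟩, rfl⟩
        have hch : hex.choose = ⟨b, hbu⟩ := hφ hex.choose_spec
        simp only [ht_def]
        rw [dif_pos hex, hch]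
        exact hzb
      · -- diameters
        intro k
        simp only [ht_def]
        split_ifs with h
        · have hta := hut h.choose.2
          have h0 : 0 < h.choose.1.2 := hta.2.1
          have hlt : h.choose.1.2 < ρ := hta.2.2.1
          refine (ediam_closedBall_le _ (by positivity)).trans ?_
          exact ENNReal.ofReal_le_ofReal (by nlinarith)
        · simp [EMetric.diam]
      · -- sum estimate
        have hGmeas : ∀ k, MeasurableSet (G k) := by
          intro k
          simp only [hG_def]
          split_ifs
          exacts [isOpen_pball.measurableSet, MeasurableSet.empty]
        have hGdisj : Pairwise (Function.onFun Disjoint G) := by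
          intro k k' hkk'
          simp only [Function.onFun, hG_def]
          split_ifs with h h'
          · have hbb : h.choose ≠ h'.choose := by
              intro e
              exact hkk' (by rw [← h.choose_spec, ← h'.choose_spec, e])
            have hdj :
                Disjoint (Metric.closedBall (toPM n h.choose.1.1) h.choose.1.2)
                  (Metric.closedBall (toPM n h'.choose.1.1) h'.choose.1.2) :=
              hdisj h.choose.2 h'.choose.2 (fun e => hbb (Subtype.ext e))
            have h01 : 0 < h.choose.1.2 := (hut h.choose.2).2.1
            have h02 : 0 < h'.choose.1.2 := (hut h'.choose.2).2.1
            exact hdj.mono (pball_subset_closedBall _ h01) (pball_subset_closedBall _ h02)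
          · exact disjoint_bot_right
          · exact disjoint_bot_left
          · exact disjoint_bot_left
        have hGsub : ∀ k, G k ⊆ Metric.cthickening δ0 S := by
          intro k
          simp only [hG_def]
          split_ifs with h
          · have hta := hut h.choose.2
            have h0 : 0 < h.choose.1.2 := hta.2.1
            have h1 : h.choose.1.2 ≤ 1 := le_trans hta.2.2.1.le hρ1
            have hzS : h.choose.1.1 ∈ S := hta.1.1
            refine (pball_subset_thickening hzS h0 h1).trans ?_
            exact Metric.thickening_subset_cthickening_of_le
              (le_trans hta.2.2.1.le hρδ) _
          · exact empty_subset _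
        have hkey : ∀ k, EMetric.diam (t k) ^ d ≤
            (8:ℝ≥0∞) ^ d * (μ' (G k) / ENNReal.ofReal ε) := by
          intro k
          simp only [ht_def, hG_def]
          split_ifs with h
          · have hta := hut h.choose.2
            obtain ⟨haE, har0, harρ, haint⟩ := hta
            set a := h.choose.1 with ha_def
            set I := ∫ p in pball a.1 a.2, f p with hI_def
            have hpow : 0 < a.2 ^ d := Real.rpow_pos_of_pos har0 _
            have hre : ε * a.2 ^ d ≤ I := by
              have h1 : a.2 ^ ((2 : ℝ) - n) * a.2 ^ d = 1 := by
                rw [← Real.rpow_add har0]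
                norm_num [hd_def]
              have h2 := mul_lt_mul_of_pos_right haint hpow
              calc ε * a.2 ^ d ≤ (a.2 ^ ((2 : ℝ) - n) * I) * a.2 ^ d := h2.le
                _ = I * (a.2 ^ ((2 : ℝ) - n) * a.2 ^ d) := by ring
                _ = I := by rw [h1, mul_one]
            have h3 : ENNReal.ofReal a.2 ^ d * ENNReal.ofReal ε ≤ μ' (pball a.1 a.2) := by
              rw [ENNReal.ofReal_rpow_of_pos har0,
                ← ENNReal.ofReal_mul (Real.rpow_nonneg har0.le _), ← hint_eq]
              refine ENNReal.ofReal_le_ofReal ?_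
              rw [← hI_def]
              linarith
            have h4 : ENNReal.ofReal a.2 ^ d ≤ μ' (pball a.1 a.2) / ENNReal.ofReal ε :=
              (ENNReal.le_div_iff_mul_le (Or.inl hεne)
                (Or.inl ENNReal.ofReal_ne_top)).2 h3
            calc EMetric.diam (Metric.closedBall (toPM n a.1) (4 * a.2)) ^ d
                ≤ (ENNReal.ofReal (2 * (4 * a.2))) ^ d :=
                  ENNReal.rpow_le_rpow (ediam_closedBall_le _ (by positivity)) hd.le
              _ = (ENNReal.ofReal 8 * ENNReal.ofReal a.2) ^ d := by
                  rw [← ENNReal.ofReal_mul (by norm_num : (0:ℝ) ≤ 8)]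
                  ring_nf
              _ = (8:ℝ≥0∞) ^ d * ENNReal.ofReal a.2 ^ d := by
                  rw [ENNReal.mul_rpow_of_nonneg _ _ hd.le]
                  norm_num
              _ ≤ _ := mul_le_mul_right h4 _
          · simp [EMetric.diam, ENNReal.zero_rpow_of_pos hd]
        calc ∑' k, EMetric.diam (t k) ^ d
            ≤ ∑' k, (8:ℝ≥0∞) ^ d * (μ' (G k) / ENNReal.ofReal ε) :=
              ENNReal.tsum_le_tsum hkey
          _ = (8:ℝ≥0∞) ^ d * ((∑' k, μ' (G k)) / ENNReal.ofReal ε) := by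
              rw [ENNReal.tsum_mul_left]
              congr 1
              simp only [div_eq_mul_inv]
              rw [ENNReal.tsum_mul_right]
          _ = (8:ℝ≥0∞) ^ d * (μ' (⋃ k, G k) / ENNReal.ofReal ε) := by
              rw [measure_iUnion hGdisj hGmeas]
          _ ≤ (8:ℝ≥0∞) ^ d * (η / ENNReal.ofReal ε) := by
              gcongr
              exact le_trans (measure_mono (iUnion_subset hGsub)) hδ0.le
    -- apply `hausdorffMeasure_le_liminf_tsum`
    set ρ : ℕ → ℝ := fun m => min (1 / (m + 1)) (min 1 δ0) with hρ_def
    have hρ0 : ∀ m, 0 < ρ m := fun m =>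
      lt_min (by positivity) (lt_min one_pos hδ0pos)
    have hρδ : ∀ m, ρ m ≤ δ0 := fun m =>
      le_trans (min_le_right _ _) (min_le_right _ _)
    have hρ1 : ∀ m, ρ m ≤ 1 := fun m =>
      le_trans (min_le_right _ _) (min_le_left _ _)
    choose t ht1 ht2 ht3 using fun m => hcover (ρ m) (hρ0 m) (hρδ m) (hρ1 m)
    have hrtend : Tendsto (fun m : ℕ => ENNReal.ofReal (8 * ρ m)) atTop (nhds 0) := by
      have h1 : Tendsto ρ atTop (nhds 0) := by
        refine squeeze_zero (fun m => (hρ0 m).le) (fun m => min_le_left _ _) ?_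
        exact tendsto_one_div_add_atTop_nhds_zero_nat
      have h2 : Tendsto (fun m : ℕ => 8 * ρ m) atTop (nhds 0) := by
        have h2' := h1.const_mul (8:ℝ)
        rwa [mul_zero] at h2'
      have h3 := (ENNReal.continuous_ofReal.tendsto 0).comp h2
      rwa [ENNReal.ofReal_zero] at h3
    have hle := Measure.hausdorffMeasure_le_liminf_tsum d (toPM n '' E)
      (fun m : ℕ => ENNReal.ofReal (8 * ρ m)) hrtend t
      (Eventually.of_forall ht2) (Eventually.of_forall ht1)
    refine hle.trans ?_
    exact liminf_le_of_frequently_le' ((Eventually.of_forall ht3).frequently)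
  -- conclude
  refine le_antisymm ?_ zero_le
  refine ENNReal.le_of_forall_pos_le_add fun δ hδ _ => ?_
  rw [zero_add]
  set η : ℝ≥0∞ := ((δ : ℝ≥0∞) / (8:ℝ≥0∞) ^ d) * ENNReal.ofReal ε with hη_def
  have hηpos : 0 < η := by
    refine ENNReal.mul_pos ?_ hεne
    exact (ENNReal.div_pos (by exact_mod_cast hδ.ne') h8top).ne'
  refine (claim η hηpos).trans ?_
  rw [hη_def, mul_div_assoc, ENNReal.div_self hεne ENNReal.ofReal_ne_top, mul_one]
  calc (8:ℝ≥0∞) ^ d * ((δ : ℝ≥0∞) / (8:ℝ≥0∞) ^ d) ≤ (δ : ℝ≥0∞) := ENNReal.mul_div_le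

/-- If `f ≥ 0` is integrable on `ℝⁿ × ℝ` and `Σ` is a closed Lebesgue-null
set, then the set of `z ∈ Σ` where `limsup_{R→0⁺} R^{2−n} ∫_{P_R(z)} f > 0` is
`𝒫^{n−2}`-null; in particular for `𝒫^{n−2}`-a.e. `z ∈ Σ`,
`lim_{R→0⁺} R^{2−n} ∫_{P_R(z)} f = 0`. -/
theorem parabolic_density_vanishes_ae
    (n : ℕ) (hn : 3 ≤ n) (f : EuclideanSpace ℝ (Fin n) × ℝ → ℝ)
    (hf0 : ∀ p, 0 ≤ f p) (hfint : Integrable f volume)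
    (S : Set (EuclideanSpace ℝ (Fin n) × ℝ)) (hScl : IsClosed S) (hSnull : volume S = 0) :
    μH[(n : ℝ) - 2] (toPM n ''
        {z ∈ S | 0 < limsup (fun R : ℝ => R ^ ((2 : ℝ) - n) * ∫ p in pball z R, f p)
          (nhdsWithin 0 (Ioi 0))}) = 0
    ∧ μH[(n : ℝ) - 2] (toPM n ''
        {z ∈ S | ¬ Tendsto (fun R : ℝ => R ^ ((2 : ℝ) - n) * ∫ p in pball z R, f p)
          (nhdsWithin 0 (Ioi 0)) (nhds 0)}) = 0 := by
  classical
  set Ek : ℕ → Set (EuclideanSpace ℝ (Fin n) × ℝ) := fun k =>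
    {z | z ∈ S ∧ ∃ᶠ R in nhdsWithin (0:ℝ) (Ioi 0),
      1 / (k + 1 : ℝ) < R ^ ((2 : ℝ) - n) * ∫ p in pball z R, f p} with hEk_def
  have hEk0 : ∀ k : ℕ, μH[(n : ℝ) - 2] (toPM n '' Ek k) = 0 := fun k =>
    key_null n hn f hf0 hfint S hScl hSnull _ (by positivity)
  have hU : μH[(n : ℝ) - 2] (⋃ k : ℕ, toPM n '' Ek k) = 0 := measure_iUnion_null hEk0
  have hnn : ∀ z : EuclideanSpace ℝ (Fin n) × ℝ, ∀ᶠ R in nhdsWithin (0:ℝ) (Ioi 0),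
      0 ≤ R ^ ((2 : ℝ) - n) * ∫ p in pball z R, f p := by
    intro z
    filter_upwards [self_mem_nhdsWithin] with R hR
    exact mul_nonneg (Real.rpow_nonneg (le_of_lt hR) _) (integral_nonneg fun p => hf0 p)
  have hev : ∀ z : EuclideanSpace ℝ (Fin n) × ℝ, z ∈ S → (∀ k : ℕ, z ∉ Ek k) →
      ∀ k : ℕ, ∀ᶠ R in nhdsWithin (0:ℝ) (Ioi 0),
        R ^ ((2 : ℝ) - n) * (∫ p in pball z R, f p) ≤ 1 / (k + 1 : ℝ) := by
    intro z hzS hcon k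
    have h1 := hcon k
    simp only [hEk_def, mem_setOf_eq, not_and] at h1
    have h2 := h1 hzS
    rw [Filter.not_frequently] at h2
    exact h2.mono fun R hR => not_lt.1 hR
  constructor
  · refine measure_mono_null ?_ hU
    rintro _ ⟨z, ⟨hzS, hzL⟩, rfl⟩
    have hzmem : ∃ k : ℕ, z ∈ Ek k := by
      by_contra hcon
      push_neg at hcon
      have hk := hev z hzS hcon
      have hL : limsup (fun R : ℝ => R ^ ((2 : ℝ) - n) * ∫ p in pball z R, f p)
          (nhdsWithin (0:ℝ) (Ioi 0)) ≤ 0 := by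
        have hcb : IsCoboundedUnder (· ≤ ·) (nhdsWithin (0:ℝ) (Ioi 0))
            (fun R : ℝ => R ^ ((2 : ℝ) - n) * ∫ p in pball z R, f p) :=
          isCoboundedUnder_le_of_eventually_le _ (x := 0) (hnn z)
        refine le_of_forall_pos_le_add fun ε' hε' => ?_
        obtain ⟨k, hk'⟩ := exists_nat_one_div_lt hε'
        rw [zero_add]
        exact (Filter.limsup_le_of_le hcb (hk k)).trans hk'.le
      exact absurd hzL (not_lt.2 hL)
    obtain ⟨k, hk⟩ := hzmem
    exact mem_iUnion.2 ⟨k, ⟨z, hk, rfl⟩⟩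
  · refine measure_mono_null ?_ hU
    rintro _ ⟨z, ⟨hzS, hzT⟩, rfl⟩
    have hzmem : ∃ k : ℕ, z ∈ Ek k := by
      by_contra hcon
      push_neg at hcon
      have hk := hev z hzS hcon
      refine absurd ?_ hzT
      rw [Metric.tendsto_nhds]
      intro ε' hε'
      obtain ⟨k, hk'⟩ := exists_nat_one_div_lt hε'
      filter_upwards [hk k, hnn z] with R h1 h2
      rw [Real.dist_eq, sub_zero, abs_of_nonneg h2]
      exact lt_of_le_of_lt h1 hk'
    obtain ⟨k, hk⟩ := hzmem
    exact mem_iUnion.2 ⟨k, ⟨z, hk, rfl⟩⟩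

end
end

section
/- Let n ≥ 4, ε > 0, Λ > 0, and let {g_i}_{i∈ℕ} be nonnegative Lebesgue-measurable functions on ℝⁿ × ℝ with ∫_{ℝⁿ×ℝ} g_i dx dt ≤ Λ for every i. Define 𝒞_ε := { z ∈ ℝⁿ × ℝ : liminf_{r→0⁺} liminf_{i→∞} r^{4−n} ∫_{P_r(z)} g_i(x,t) dx dt ≥ ε }. Then there is a constant C = C(n), depending only on n, such that 𝒫^{n−4}(𝒞_ε) ≤ C Λ / ε; in particular 𝒞_ε has finite (n−4)-dimensional parabolic Hausdorff measure. -/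
open MeasureTheory Filter Set Topology
open scoped ENNReal

noncomputable section

lemma PM.dist_eq {n : ℕ} (p q : EuclideanSpace ℝ (Fin n) × ℝ) :
    dist (toPM n p) (toPM n q) = max (dist p.1 q.1) (Real.sqrt (dist p.2 q.2)) := rfl

lemma pball_eq_ball (n : ℕ) (z : EuclideanSpace ℝ (Fin n) × ℝ) {r : ℝ} (hr : 0 < r) :
    pball z r = (Metric.ball (toPM n z) r : Set (PM n)) := by
  ext p
  show (dist p.1 z.1 < r ∧ |p.2 - z.2| < r ^ 2) ↔ dist (toPM n p) (toPM n z) < r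
  rw [PM.dist_eq, max_lt_iff, Real.sqrt_lt' hr, Real.dist_eq]

lemma measurableSet_pball {n : ℕ} (z : EuclideanSpace ℝ (Fin n) × ℝ) (r : ℝ) :
    MeasurableSet (pball z r) := by
  have : IsOpen (pball z r) := by
    apply IsOpen.inter
    · exact isOpen_lt (continuous_fst.dist continuous_const) continuous_const
    · exact isOpen_lt ((continuous_snd.sub continuous_const).abs) continuous_const
  exact this.measurableSet

lemma cover_lemma (n : ℕ) (hn : 4 ≤ n) (ε Λ : ℝ) (hε : 0 < ε) (hΛ : 0 < Λ)
    (g : ℕ → EuclideanSpace ℝ (Fin n) × ℝ → ℝ)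
    (hgint : ∀ i, (∫⁻ p, ENNReal.ofReal (g i p)) ≤ ENNReal.ofReal Λ)
    (S : Set (EuclideanSpace ℝ (Fin n) × ℝ))
    (hS : ∀ z ∈ S, ENNReal.ofReal ε ≤
      liminf (fun r : ℝ =>
        liminf (fun i : ℕ =>
          ENNReal.ofReal (r ^ ((4 : ℝ) - n)) *
            ∫⁻ p in pball z r, ENNReal.ofReal (g i p)) atTop)
        (nhdsWithin 0 (Ioi 0)))
    {δ : ℝ} (hδ : 0 < δ) :
    ∃ (u : Set (EuclideanSpace ℝ (Fin n) × ℝ)) (rad : EuclideanSpace ℝ (Fin n) × ℝ → ℝ),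
      u.Countable ∧ (∀ b ∈ u, 0 < rad b ∧ rad b ≤ δ) ∧
      (toPM n '' S ⊆ ⋃ b ∈ u, Metric.closedBall (toPM n b) (5 * rad b)) ∧
      ∑' (b : u), ENNReal.ofReal ((10 * rad (b : _)) ^ ((n : ℝ) - 4)) ≤
        ENNReal.ofReal ((10:ℝ) ^ ((n : ℝ) - 4)) * ENNReal.ofReal (4 * Λ / ε) := by
  classical
  set d : ℝ := (n : ℝ) - 4 with hd_def
  have hn4 : (4:ℝ) ≤ (n:ℝ) := by exact_mod_cast hn
  have hd : 0 ≤ d := by rw [hd_def]; linarith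
  -- Step 1: choose good radii
  have step1 : ∀ z ∈ S, ∃ r : ℝ, (0 < r ∧ r ≤ δ) ∧
      ENNReal.ofReal (ε/2) ≤ liminf (fun i : ℕ =>
        ENNReal.ofReal (r ^ ((4:ℝ) - n)) *
          ∫⁻ p in pball z r, ENNReal.ofReal (g i p)) atTop := by
    intro z hz
    by_contra hcon
    push_neg at hcon
    have hIoo : Ioo (0:ℝ) δ ∈ nhdsWithin (0:ℝ) (Ioi 0) :=
      Ioo_mem_nhdsGT_of_mem ⟨le_refl _, hδ⟩
    have hev : ∀ᶠ r in nhdsWithin (0:ℝ) (Ioi 0),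
        liminf (fun i : ℕ =>
          ENNReal.ofReal (r ^ ((4:ℝ) - n)) *
            ∫⁻ p in pball z r, ENNReal.ofReal (g i p)) atTop ≤ ENNReal.ofReal (ε/2) :=
      eventually_of_mem hIoo fun r hr => (hcon r ⟨hr.1, hr.2.le⟩).le
    have hle : liminf (fun r : ℝ =>
        liminf (fun i : ℕ =>
          ENNReal.ofReal (r ^ ((4:ℝ) - n)) *
            ∫⁻ p in pball z r, ENNReal.ofReal (g i p)) atTop)
        (nhdsWithin 0 (Ioi 0)) ≤ ENNReal.ofReal (ε/2) :=
      liminf_le_of_frequently_le' hev.frequently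
    have : ENNReal.ofReal (ε/2) < ENNReal.ofReal ε := by
      rw [ENNReal.ofReal_lt_ofReal_iff hε]; linarith
    exact absurd ((hS z hz).trans hle) (not_le.mpr this)
  choose! rad hrad using step1
  -- Step 2: Vitali
  obtain ⟨u, huS, hdisj, henl⟩ :=
    Vitali.exists_disjoint_subfamily_covering_enlargement_closedBall S (toPM n) rad δ
      (fun z hz => (hrad z hz).1.2) 5 (by norm_num)
  -- Step 3: eventual lower bound for each ball
  have hlow : ∀ b ∈ u, ∀ᶠ i in atTop,
      ENNReal.ofReal (ε/4 * rad b ^ d) <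
        ∫⁻ p in pball b (rad b), ENNReal.ofReal (g i p) := by
    intro b hb
    obtain ⟨⟨hr0, hrδ⟩, hlim⟩ := hrad b (huS hb)
    set r := rad b with hr_def
    set R : ℝ≥0∞ := ENNReal.ofReal (r ^ d) with hR
    have hrd : 0 < r ^ d := Real.rpow_pos_of_pos hr0 d
    have hR0 : R ≠ 0 := by
      rw [hR, Ne, ENNReal.ofReal_eq_zero]; linarith
    have hRtop : R ≠ ⊤ := ENNReal.ofReal_ne_top
    have hc : ENNReal.ofReal (r ^ ((4:ℝ) - n)) = R⁻¹ := by
      have h1 : r ^ ((4:ℝ) - n) = (r ^ d)⁻¹ := by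
        rw [show (4:ℝ) - n = -d by rw [hd_def]; ring, Real.rpow_neg hr0.le]
      rw [h1, hR, ENNReal.ofReal_inv_of_pos hrd]
    rw [hc] at hlim
    have hev : ∀ᶠ i in atTop, ENNReal.ofReal (ε/4) <
        R⁻¹ * ∫⁻ p in pball b r, ENNReal.ofReal (g i p) := by
      by_contra hcon
      rw [Filter.not_eventually] at hcon
      have hle : liminf (fun i : ℕ =>
          R⁻¹ * ∫⁻ p in pball b r, ENNReal.ofReal (g i p)) atTop ≤ ENNReal.ofReal (ε/4) :=
        liminf_le_of_frequently_le' (hcon.mono fun i hi => not_lt.mp hi)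
      have hlt : ENNReal.ofReal (ε/4) < ENNReal.ofReal (ε/2) := by
        rw [ENNReal.ofReal_lt_ofReal_iff (by linarith)]; linarith
      exact absurd (hlim.trans hle) (not_le.mpr hlt)
    refine hev.mono fun i hi => ?_
    have h2 := ENNReal.mul_lt_mul_left hR0 hRtop hi
    rw [mul_comm R⁻¹ _, mul_assoc, ENNReal.inv_mul_cancel hR0 hRtop, mul_one] at h2
    calc ENNReal.ofReal (ε/4 * r ^ d) = ENNReal.ofReal (ε/4) * R := by
          rw [hR, ENNReal.ofReal_mul (by linarith)]
      _ < _ := h2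
  -- Step 4: finite sums are bounded
  have hfin : ∀ F : Finset (EuclideanSpace ℝ (Fin n) × ℝ), ↑F ⊆ u →
      ∑ b ∈ F, ENNReal.ofReal (ε/4 * rad b ^ d) ≤ ENNReal.ofReal Λ := by
    intro F hF
    have hall : ∀ᶠ i in atTop, ∀ b ∈ F,
        ENNReal.ofReal (ε/4 * rad b ^ d) <
          ∫⁻ p in pball b (rad b), ENNReal.ofReal (g i p) := by
      rw [eventually_all_finset]
      exact fun b hb => hlow b (hF hb)
    obtain ⟨i, hi⟩ := hall.exists
    have hdisj' : (↑F : Set (EuclideanSpace ℝ (Fin n) × ℝ)).PairwiseDisjoint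
        (fun b => pball b (rad b)) := by
      intro b hb c hc hbc
      have h1 := hdisj (hF hb) (hF hc) hbc
      have hb0 : 0 < rad b := (hrad b (huS (hF hb))).1.1
      have hc0 : 0 < rad c := (hrad c (huS (hF hc))).1.1
      have sub1 : pball b (rad b) ⊆ (Metric.closedBall (toPM n b) (rad b) : Set (PM n)) := by
        rw [pball_eq_ball n b hb0]; exact Metric.ball_subset_closedBall
      have sub2 : pball c (rad c) ⊆ (Metric.closedBall (toPM n c) (rad c) : Set (PM n)) := by
        rw [pball_eq_ball n c hc0]; exact Metric.ball_subset_closedBall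
      exact Disjoint.mono sub1 sub2 h1
    calc ∑ b ∈ F, ENNReal.ofReal (ε/4 * rad b ^ d)
        ≤ ∑ b ∈ F, ∫⁻ p in pball b (rad b), ENNReal.ofReal (g i p) :=
          Finset.sum_le_sum fun b hb => (hi b hb).le
      _ = ∫⁻ p in ⋃ b ∈ F, pball b (rad b), ENNReal.ofReal (g i p) :=
          (lintegral_biUnion_finset hdisj' (fun b _ => measurableSet_pball b (rad b)) _).symm
      _ ≤ ∫⁻ p, ENNReal.ofReal (g i p) := setLIntegral_le_lintegral _ _
      _ ≤ ENNReal.ofReal Λ := hgint i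
  -- Step 5: tsum bound
  have htsum : ∑' (b : u), ENNReal.ofReal (ε/4 * rad (b : _) ^ d) ≤ ENNReal.ofReal Λ := by
    rw [ENNReal.tsum_eq_iSup_sum]
    refine iSup_le fun s => ?_
    have h1 := hfin (s.map (Function.Embedding.subtype _)) ?_
    · rwa [Finset.sum_map] at h1
    · intro x hx
      simp only [Finset.coe_map, Function.Embedding.coe_subtype, Set.mem_image] at hx
      obtain ⟨⟨y, hy⟩, _, rfl⟩ := hx
      exact hy
  -- Step 6: countability
  have hcnt : u.Countable := by
    have hne : ∑' (a : EuclideanSpace ℝ (Fin n) × ℝ),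
        u.indicator (fun b => ENNReal.ofReal (ε/4 * rad b ^ d)) a ≠ ⊤ := by
      rw [← tsum_subtype]
      exact (htsum.trans_lt ENNReal.ofReal_lt_top).ne
    have hsupp := Summable.countable_support_ennreal hne
    refine hsupp.mono fun b hb => ?_
    rw [Function.mem_support, Set.indicator_of_mem hb, Ne, ENNReal.ofReal_eq_zero, not_le]
    have hb0 : 0 < rad b := (hrad b (huS hb)).1.1
    have := Real.rpow_pos_of_pos hb0 d
    positivity
  -- Step 7: final sum estimate
  have hS4 : ∑' (b : u), ENNReal.ofReal (rad (b : _) ^ d) ≤ ENNReal.ofReal (4 * Λ / ε) := by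
    have h1 : ENNReal.ofReal (ε/4) * ∑' (b : u), ENNReal.ofReal (rad (b : _) ^ d)
        ≤ ENNReal.ofReal Λ := by
      rw [← ENNReal.tsum_mul_left]
      refine le_trans (le_of_eq ?_) htsum
      congr 1
      ext b
      rw [← ENNReal.ofReal_mul (by linarith)]
    have h2 : ∑' (b : u), ENNReal.ofReal (rad (b : _) ^ d) ≤
        ENNReal.ofReal Λ / ENNReal.ofReal (ε/4) := by
      rw [ENNReal.le_div_iff_mul_le (Or.inl (by simp [ENNReal.ofReal_eq_zero]; linarith))
        (Or.inl ENNReal.ofReal_ne_top), mul_comm]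
      exact h1
    refine h2.trans (le_of_eq ?_)
    rw [← ENNReal.ofReal_div_of_pos (by linarith)]
    congr 1
    field_simp
  refine ⟨u, rad, hcnt, fun b hb => (hrad b (huS hb)).1, ?_, ?_⟩
  · rintro _ ⟨z, hz, rfl⟩
    obtain ⟨b, hb, hsub⟩ := henl z hz
    exact Set.mem_biUnion hb (hsub (Metric.mem_closedBall_self (hrad z hz).1.1.le))
  · calc ∑' (b : u), ENNReal.ofReal ((10 * rad (b : _)) ^ d)
        = ENNReal.ofReal ((10:ℝ) ^ d) * ∑' (b : u), ENNReal.ofReal (rad (b : _) ^ d) := by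
          rw [← ENNReal.tsum_mul_left]
          congr 1
          ext b
          have hb0 : 0 < rad (b : _) := (hrad b (huS b.2)).1.1
          rw [Real.mul_rpow (by norm_num) hb0.le, ENNReal.ofReal_mul (by positivity)]
      _ ≤ _ := by gcongr

/-- There is `C = C(n)` such that for all `ε, Λ > 0` and every sequence of
nonnegative measurable functions `g_i` with `∫ g_i ≤ Λ`, the set
`𝒞_ε = {z : liminf_{r→0⁺} liminf_{i→∞} r^{4−n} ∫_{P_r(z)} g_i ≥ ε}` satisfies
`𝒫^{n−4}(𝒞_ε) ≤ C Λ / ε`. -/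
theorem concentration_set_finite_measure
    (n : ℕ) (hn : 4 ≤ n) :
    ∃ C : ℝ, 0 < C ∧ ∀ (ε Λ : ℝ), 0 < ε → 0 < Λ →
      ∀ g : ℕ → EuclideanSpace ℝ (Fin n) × ℝ → ℝ,
        (∀ i, Measurable (g i)) → (∀ i p, 0 ≤ g i p) →
        (∀ i, (∫⁻ p, ENNReal.ofReal (g i p)) ≤ ENNReal.ofReal Λ) →
        μH[(n : ℝ) - 4] (toPM n ''
            {z | ENNReal.ofReal ε ≤
              liminf (fun r : ℝ =>
                liminf (fun i : ℕ =>
                  ENNReal.ofReal (r ^ ((4 : ℝ) - n)) *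
                    ∫⁻ p in pball z r, ENNReal.ofReal (g i p)) atTop)
                (nhdsWithin 0 (Ioi 0))})
          ≤ ENNReal.ofReal (C * Λ / ε) := by
  classical
  refine ⟨4 * 10 ^ n, by positivity, ?_⟩
  intro ε Λ hε hΛ g hgm hg0 hgint
  set d : ℝ := (n : ℝ) - 4 with hd_def
  have hn4 : (4:ℝ) ≤ (n:ℝ) := by exact_mod_cast hn
  have hd : 0 ≤ d := by rw [hd_def]; linarith
  set S : Set (EuclideanSpace ℝ (Fin n) × ℝ) :=
    {z | ENNReal.ofReal ε ≤
      liminf (fun r : ℝ =>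
        liminf (fun i : ℕ =>
          ENNReal.ofReal (r ^ ((4 : ℝ) - n)) *
            ∫⁻ p in pball z r, ENNReal.ofReal (g i p)) atTop)
        (nhdsWithin 0 (Ioi 0))} with hS_def
  have key : ∀ k : ℕ, ∃ (u : Set (EuclideanSpace ℝ (Fin n) × ℝ))
      (rad : EuclideanSpace ℝ (Fin n) × ℝ → ℝ),
      u.Countable ∧ (∀ b ∈ u, 0 < rad b ∧ rad b ≤ 1/(k+1)) ∧
      (toPM n '' S ⊆ ⋃ b ∈ u, Metric.closedBall (toPM n b) (5 * rad b)) ∧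
      ∑' (b : u), ENNReal.ofReal ((10 * rad (b : _)) ^ ((n : ℝ) - 4)) ≤
        ENNReal.ofReal ((10:ℝ) ^ ((n : ℝ) - 4)) * ENNReal.ofReal (4 * Λ / ε) := by
    intro k
    exact cover_lemma n hn ε Λ hε hΛ g hgint S (fun z hz => hz) (by positivity)
  choose u rad hcnt hpos hcov hsum using key
  haveI : ∀ k, Countable ↥(u k) := fun k => (hcnt k).to_subtype
  set M : ℝ≥0∞ := ENNReal.ofReal ((10:ℝ) ^ d) * ENNReal.ofReal (4 * Λ / ε) with hM_def
  have hdiam : ∀ (k : ℕ) (b : u k),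
      EMetric.diam (Metric.closedBall (toPM n (b : _)) (5 * rad k (b : _)) : Set (PM n)) ≤
        ENNReal.ofReal (10 * rad k (b : _)) := by
    intro k b
    refine EMetric.diam_le fun p hp q hq => ?_
    rw [edist_dist]
    apply ENNReal.ofReal_le_ofReal
    have h1 := Metric.mem_closedBall.mp hp
    have h2 := Metric.mem_closedBall.mp hq
    calc dist p q ≤ dist p (toPM n (b : _)) + dist q (toPM n (b : _)) :=
          dist_triangle_right _ _ _
      _ ≤ 5 * rad k (b : _) + 5 * rad k (b : _) := add_le_add h1 h2
      _ = 10 * rad k (b : _) := by ring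
  have hmain : μH[d] (toPM n '' S) ≤ M := by
    have hle := MeasureTheory.Measure.hausdorffMeasure_le_liminf_tsum (ι := fun k => ↥(u k)) (l := atTop) d (toPM n '' S)
      (fun k : ℕ => ENNReal.ofReal (10 / (k+1)))
      ?_ (fun k b => Metric.closedBall (toPM n (b : _)) (5 * rad k (b : _))) ?_ ?_
    · refine hle.trans ?_
      refine liminf_le_of_frequently_le' (Frequently.of_forall fun k => ?_)
      calc ∑' (b : u k), EMetric.diam
            (Metric.closedBall (toPM n (b : _)) (5 * rad k (b : _)) : Set (PM n)) ^ d
          ≤ ∑' (b : u k), ENNReal.ofReal ((10 * rad k (b : _)) ^ d) := by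
            refine ENNReal.tsum_le_tsum fun b => ?_
            have h1 := hdiam k b
            have hb0 : 0 < rad k (b : _) := (hpos k (b : _) b.2).1
            calc EMetric.diam _ ^ d ≤ ENNReal.ofReal (10 * rad k (b : _)) ^ d :=
                  ENNReal.rpow_le_rpow h1 hd
              _ = ENNReal.ofReal ((10 * rad k (b : _)) ^ d) :=
                  ENNReal.ofReal_rpow_of_pos (by linarith)
        _ ≤ M := hsum k
    · have h1 : Tendsto (fun k : ℕ => 10 / ((k:ℝ)+1)) atTop (nhds 0) := by
        have h2 := tendsto_one_div_add_atTop_nhds_zero_nat (𝕜 := ℝ)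
        have h3 := h2.const_mul (10:ℝ)
        simpa [mul_one_div, div_eq_mul_inv] using h3
      have := ENNReal.tendsto_ofReal (a := 0) h1
      simpa using this
    · refine Eventually.of_forall fun k => fun b => ?_
      refine (hdiam k b).trans ?_
      apply ENNReal.ofReal_le_ofReal
      have hb := (hpos k (b : _) b.2).2
      have : (0:ℝ) < (k:ℝ)+1 := by positivity
      calc (10:ℝ) * rad k (b : _) ≤ 10 * (1/((k:ℝ)+1)) := by
            have := (hpos k (b : _) b.2).2
            nlinarith
        _ = 10 / ((k:ℝ)+1) := by ring
    · refine Eventually.of_forall fun k => ?_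
      refine (hcov k).trans ?_
      rw [Set.iUnion_subtype]  -- ⋃ b ∈ u k ... = ⋃ (b : u k), ...
  refine hmain.trans ?_
  rw [hM_def, ← ENNReal.ofReal_mul (by positivity)]
  apply ENNReal.ofReal_le_ofReal
  have h10 : (10:ℝ) ^ d ≤ 10 ^ (n:ℝ) := by
    apply Real.rpow_le_rpow_of_exponent_le (by norm_num)
    rw [hd_def]; linarith
  rw [Real.rpow_natCast] at h10
  calc (10:ℝ) ^ d * (4 * Λ / ε) ≤ 10 ^ n * (4 * Λ / ε) := by
        apply mul_le_mul_of_nonneg_right h10 (by positivity)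
    _ = 4 * 10 ^ n * Λ / ε := by ring

end
end

section
/- Let U ⊆ ℝⁿ be open and Γ : U → (ℝⁿ)* ⊗ gl(k,ℝ) smooth, with curvature F_{ij} = ∂_iΓ_j − ∂_jΓ_i + [Γ_i, Γ_j] and covariant derivative ∇_iω = ∂_iω + [Γ_i, ω]. Then for every index a with 1 ≤ a ≤ n and at every point of U: ∂_a ( Σ_{I,J=1}^n tr(F_{IJ} F_{IJ}) ) = −4 Σ_{J=1}^n ∂_J ( Σ_{I=1}^n tr(F_{IJ} F_{aI}) ) − 4 Σ_{I,J=1}^n tr( (∇_J F_{JI}) F_{aI} ). -/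
open Set
open scoped ContDiff

noncomputable section

/-- Trace of a product of two matrices: `tr(AB)`. -/
def trMul {k : ℕ} (A B : Mat k) : ℝ := ∑ a, ∑ b, A a b * B b a

/-- Curvature `F_{ij} = ∂_iΓ_j − ∂_jΓ_i + [Γ_i,Γ_j]` of a connection matrix `Γ`. -/
def curvS {n k : ℕ} (Γ : (Fin n → ℝ) → Fin n → Mat k) (x : Fin n → ℝ) (i j : Fin n) : Mat k :=
  pd (fun y => Γ y j) x i - pd (fun y => Γ y i) x j + mbra (Γ x i) (Γ x j)

/-- Covariant derivative `∇_i ω = ∂_i ω + [Γ_i, ω]`. -/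
def covS {n k : ℕ} (Γ : (Fin n → ℝ) → Fin n → Mat k) (om : (Fin n → ℝ) → Mat k)
    (x : Fin n → ℝ) (i : Fin n) : Mat k :=
  pd om x i + mbra (Γ x i) (om x)

namespace Aux


variable {n k : ℕ}

/- ## Algebra lemmas -/

lemma mmul_assoc (A B C : Mat k) : mmul (mmul A B) C = mmul A (mmul B C) := by
  funext i j
  simp only [mmul, Finset.sum_mul, Finset.mul_sum]
  rw [Finset.sum_comm]
  apply Finset.sum_congr rfl; intros; apply Finset.sum_congr rfl; intros; ring

lemma mmul_sub (A B C : Mat k) : mmul A (B - C) = mmul A B - mmul A C := by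
  funext i j
  simp [mmul, mul_sub, Finset.sum_sub_distrib]

lemma sub_mmul (A B C : Mat k) : mmul (A - B) C = mmul A C - mmul B C := by
  funext i j
  simp [mmul, sub_mul, Finset.sum_sub_distrib]

lemma mmul_add (A B C : Mat k) : mmul A (B + C) = mmul A B + mmul A C := by
  funext i j
  simp [mmul, mul_add, Finset.sum_add_distrib]

lemma add_mmul (A B C : Mat k) : mmul (A + B) C = mmul A C + mmul B C := by
  funext i j
  simp [mmul, add_mul, Finset.sum_add_distrib]

lemma mmul_neg (A B : Mat k) : mmul A (-B) = -(mmul A B) := by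
  funext i j; simp [mmul]

lemma neg_mmul (A B : Mat k) : mmul (-A) B = -(mmul A B) := by
  funext i j; simp [mmul]

lemma mbra_skew (A B : Mat k) : mbra A B = -(mbra B A) := by
  unfold mbra; abel

lemma mbra_neg_right (A B : Mat k) : mbra A (-B) = -(mbra A B) := by
  unfold mbra; rw [mmul_neg, neg_mmul]; abel

lemma trMul_comm (A B : Mat k) : trMul A B = trMul B A := by
  unfold trMul; rw [Finset.sum_comm]
  apply Finset.sum_congr rfl; intros; apply Finset.sum_congr rfl; intros; ring

lemma trMul_mmul_assoc (A B C : Mat k) : trMul (mmul A B) C = trMul A (mmul B C) := by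
  unfold trMul mmul
  simp only [Finset.sum_mul, Finset.mul_sum]
  apply Finset.sum_congr rfl; intro p _
  rw [Finset.sum_comm]
  apply Finset.sum_congr rfl; intros; apply Finset.sum_congr rfl; intros; ring

lemma trMul_sub_left (A B C : Mat k) : trMul (A - B) C = trMul A C - trMul B C := by
  unfold trMul; simp [sub_mul, Finset.sum_sub_distrib]

lemma trMul_sub_right (A B C : Mat k) : trMul A (B - C) = trMul A B - trMul A C := by
  unfold trMul; simp [mul_sub, Finset.sum_sub_distrib]

lemma trMul_add_left (A B C : Mat k) : trMul (A + B) C = trMul A C + trMul B C := by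
  unfold trMul; simp [add_mul, Finset.sum_add_distrib]

lemma trMul_neg_left (A B : Mat k) : trMul (-A) B = -trMul A B := by
  unfold trMul; simp

lemma trMul_neg_right (A B : Mat k) : trMul A (-B) = -trMul A B := by
  unfold trMul; simp

/-- tr([G,A]B) = -tr(A[G,B]) -/
lemma trMul_mbra (G A B : Mat k) : trMul (mbra G A) B = -trMul A (mbra G B) := by
  unfold mbra
  rw [trMul_sub_left, trMul_sub_right, trMul_mmul_assoc, trMul_mmul_assoc,
    show trMul A (mmul B G) = trMul G (mmul A B) from by
      rw [← trMul_mmul_assoc, trMul_comm]]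
  ring

lemma trMul_mbra_self (G A : Mat k) : trMul (mbra G A) A = 0 := by
  have h := trMul_mbra G A A
  have h2 : trMul A (mbra G A) = trMul (mbra G A) A := trMul_comm _ _
  linarith [h, h2]

lemma jacobi (A B C : Mat k) :
    mbra A (mbra B C) + mbra B (mbra C A) + mbra C (mbra A B) = 0 := by
  simp only [mbra, mmul_sub, sub_mmul, mmul_assoc]
  abel


variable {n k : ℕ} {x : Fin n → ℝ}

lemma differentiableAt_apply {f : (Fin n → ℝ) → Mat k} (h : DifferentiableAt ℝ f x)
    (p q : Fin k) : DifferentiableAt ℝ (fun y => f y p q) x := by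
  have h1 : DifferentiableAt ℝ (fun y => f y p) x :=
    ((ContinuousLinearMap.proj p : Mat k →L[ℝ] (Fin k → ℝ)).differentiableAt).comp x h
  exact ((ContinuousLinearMap.proj q : (Fin k → ℝ) →L[ℝ] ℝ).differentiableAt).comp x h1

lemma pd_apply {f : (Fin n → ℝ) → Mat k} (h : DifferentiableAt ℝ f x) (i : Fin n)
    (p q : Fin k) : pd f x i p q = pd (fun y => f y p q) x i := by
  have h1 : HasFDerivAt (fun y => f y p)
      ((ContinuousLinearMap.proj p : Mat k →L[ℝ] (Fin k → ℝ)).comp (fderiv ℝ f x)) x :=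
    ((ContinuousLinearMap.proj p : Mat k →L[ℝ] (Fin k → ℝ)).hasFDerivAt).comp x h.hasFDerivAt
  have h2 : HasFDerivAt (fun y => f y p q)
      ((ContinuousLinearMap.proj q : (Fin k → ℝ) →L[ℝ] ℝ).comp
        ((ContinuousLinearMap.proj p : Mat k →L[ℝ] (Fin k → ℝ)).comp (fderiv ℝ f x))) x :=
    ((ContinuousLinearMap.proj q : (Fin k → ℝ) →L[ℝ] ℝ).hasFDerivAt).comp x h1
  rw [pd, pd, h2.fderiv]; rfl

variable {E : Type*} [NormedAddCommGroup E] [NormedSpace ℝ E]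

lemma pd_add {f g : (Fin n → ℝ) → E} (hf : DifferentiableAt ℝ f x)
    (hg : DifferentiableAt ℝ g x) (i : Fin n) :
    pd (fun y => f y + g y) x i = pd f x i + pd g x i := by
  unfold pd; rw [fderiv_fun_add hf hg]; rfl

lemma pd_sub {f g : (Fin n → ℝ) → E} (hf : DifferentiableAt ℝ f x)
    (hg : DifferentiableAt ℝ g x) (i : Fin n) :
    pd (fun y => f y - g y) x i = pd f x i - pd g x i := by
  unfold pd; rw [fderiv_fun_sub hf hg]; rfl

lemma pd_neg {f : (Fin n → ℝ) → E} (i : Fin n) :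
    pd (fun y => -(f y)) x i = -(pd f x i) := by
  unfold pd; rw [fderiv_fun_neg]; rfl

lemma pd_sum {ι : Type*} (s : Finset ι) {f : ι → (Fin n → ℝ) → E}
    (h : ∀ j ∈ s, DifferentiableAt ℝ (f j) x) (i : Fin n) :
    pd (fun y => ∑ j ∈ s, f j y) x i = ∑ j ∈ s, pd (f j) x i := by
  unfold pd; rw [fderiv_fun_sum h]; simp

lemma pd_mul {f g : (Fin n → ℝ) → ℝ} (hf : DifferentiableAt ℝ f x)
    (hg : DifferentiableAt ℝ g x) (i : Fin n) :
    pd (fun y => f y * g y) x i = pd f x i * g x + f x * pd g x i := by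
  unfold pd; rw [fderiv_fun_mul hf hg]; simp; ring

lemma DifferentiableAt.mmulD {f g : (Fin n → ℝ) → Mat k} (hf : DifferentiableAt ℝ f x)
    (hg : DifferentiableAt ℝ g x) :
    DifferentiableAt ℝ (fun y => mmul (f y) (g y)) x := by
  apply differentiableAt_pi.2; intro p; apply differentiableAt_pi.2; intro q
  simp only [mmul]
  exact DifferentiableAt.fun_sum fun l _ =>
    (differentiableAt_apply hf p l).fun_mul (differentiableAt_apply hg l q)

lemma DifferentiableAt.mbraD {f g : (Fin n → ℝ) → Mat k} (hf : DifferentiableAt ℝ f x)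
    (hg : DifferentiableAt ℝ g x) :
    DifferentiableAt ℝ (fun y => mbra (f y) (g y)) x := by
  simp only [mbra]
  exact (DifferentiableAt.mmulD hf hg).sub (DifferentiableAt.mmulD hg hf)

lemma DifferentiableAt.trMulD {f g : (Fin n → ℝ) → Mat k} (hf : DifferentiableAt ℝ f x)
    (hg : DifferentiableAt ℝ g x) :
    DifferentiableAt ℝ (fun y => trMul (f y) (g y)) x := by
  simp only [trMul]
  exact DifferentiableAt.fun_sum fun p _ => DifferentiableAt.fun_sum fun q _ =>
    (differentiableAt_apply hf p q).fun_mul (differentiableAt_apply hg q p)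

lemma pd_mmul {f g : (Fin n → ℝ) → Mat k} (hf : DifferentiableAt ℝ f x)
    (hg : DifferentiableAt ℝ g x) (i : Fin n) :
    pd (fun y => mmul (f y) (g y)) x i = mmul (pd f x i) (g x) + mmul (f x) (pd g x i) := by
  funext p q
  rw [show (pd (fun y => mmul (f y) (g y)) x i) p q
      = pd (fun y => mmul (f y) (g y) p q) x i from
    pd_apply (DifferentiableAt.mmulD hf hg) i p q]
  simp only [mmul, Pi.add_apply]
  rw [pd_sum Finset.univ (fun l _ =>
    (differentiableAt_apply hf p l).fun_mul (differentiableAt_apply hg l q)) i]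
  rw [← Finset.sum_add_distrib]
  apply Finset.sum_congr rfl; intro l _
  rw [pd_mul (differentiableAt_apply hf p l) (differentiableAt_apply hg l q),
    pd_apply hf i p l, pd_apply hg i l q]

lemma pd_mbra {f g : (Fin n → ℝ) → Mat k} (hf : DifferentiableAt ℝ f x)
    (hg : DifferentiableAt ℝ g x) (i : Fin n) :
    pd (fun y => mbra (f y) (g y)) x i
      = mbra (pd f x i) (g x) + mbra (f x) (pd g x i) := by
  simp only [mbra]
  rw [pd_sub (DifferentiableAt.mmulD hf hg) (DifferentiableAt.mmulD hg hf),
    pd_mmul hf hg, pd_mmul hg hf]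
  abel

lemma pd_trMul {f g : (Fin n → ℝ) → Mat k} (hf : DifferentiableAt ℝ f x)
    (hg : DifferentiableAt ℝ g x) (i : Fin n) :
    pd (fun y => trMul (f y) (g y)) x i
      = trMul (pd f x i) (g x) + trMul (f x) (pd g x i) := by
  simp only [trMul]
  rw [pd_sum Finset.univ (fun p _ => DifferentiableAt.fun_sum fun q _ =>
    (differentiableAt_apply hf p q).fun_mul (differentiableAt_apply hg q p)) i]
  rw [← Finset.sum_add_distrib]
  apply Finset.sum_congr rfl; intro p _
  rw [pd_sum Finset.univ (fun q _ =>
    (differentiableAt_apply hf p q).fun_mul (differentiableAt_apply hg q p)) i]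
  rw [← Finset.sum_add_distrib]
  apply Finset.sum_congr rfl; intro q _
  rw [pd_mul (differentiableAt_apply hf p q) (differentiableAt_apply hg q p),
    pd_apply hf i p q, pd_apply hg i q p]

lemma pd_pd_symm {f : (Fin n → ℝ) → E} (hf : ContDiffAt ℝ ∞ f x) (i j : Fin n) :
    pd (fun y => pd f y i) x j = pd (fun y => pd f y j) x i := by
  have hsymm : IsSymmSndFDerivAt ℝ f x :=
    hf.isSymmSndFDerivAt (by simp; exact_mod_cast ENat.natCast_le_of_coe_top_le_withTop le_rfl 2)
  have hd : DifferentiableAt ℝ (fderiv ℝ f) x := by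
    have h1 : ContDiffAt ℝ ∞ (fderiv ℝ f) x :=
      hf.fderiv_right (by simp)
    exact h1.differentiableAt (by simp)
  have key : ∀ (d : Fin n) (v : Fin n → ℝ),
      pd (fun y => fderiv ℝ f y v) x d = fderiv ℝ (fderiv ℝ f) x (Pi.single d 1) v := by
    intro d v
    unfold pd
    have hc : HasFDerivAt (fun y => fderiv ℝ f y v)
        ((ContinuousLinearMap.apply ℝ E v).comp (fderiv ℝ (fderiv ℝ f) x)) x :=
      ((ContinuousLinearMap.apply ℝ E v).hasFDerivAt).comp x hd.hasFDerivAt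
    rw [hc.fderiv]; rfl
  rw [show (fun y => pd f y i) = fun y => fderiv ℝ f y (Pi.single i 1) from rfl,
    show (fun y => pd f y j) = fun y => fderiv ℝ f y (Pi.single j 1) from rfl,
    key j (Pi.single i 1), key i (Pi.single j 1)]
  exact hsymm _ _


/- ## Smoothness helpers -/

variable {Γ : (Fin n → ℝ) → Fin n → Mat k}

lemma h1le : (1 : WithTop ℕ∞) ≤ ∞ := by
  exact_mod_cast ENat.natCast_le_of_coe_top_le_withTop le_rfl 1

lemma hGc (hΓ : ContDiffAt ℝ ∞ Γ x) (j : Fin n) :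
    ContDiffAt ℝ ∞ (fun y => Γ y j) x :=
  ((ContinuousLinearMap.proj j : (Fin n → Mat k) →L[ℝ] Mat k).contDiff.contDiffAt).comp x hΓ

lemma hGd (hΓ : ContDiffAt ℝ ∞ Γ x) (j : Fin n) :
    DifferentiableAt ℝ (fun y => Γ y j) x :=
  (hGc hΓ j).differentiableAt (by simp)

lemma hdG (hΓ : ContDiffAt ℝ ∞ Γ x) (i j : Fin n) :
    ContDiffAt ℝ ∞ (fun y => pd (fun z => Γ z j) y i) x := by
  have hfd : ContDiffAt ℝ ∞ (fderiv ℝ (fun z => Γ z j)) x :=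
    (hGc hΓ j).fderiv_right (by simp)
  exact hfd.clm_apply contDiffAt_const

lemma hdGd (hΓ : ContDiffAt ℝ ∞ Γ x) (i j : Fin n) :
    DifferentiableAt ℝ (fun y => pd (fun z => Γ z j) y i) x :=
  (hdG hΓ i j).differentiableAt (by simp)

lemma hDF (hΓ : ContDiffAt ℝ ∞ Γ x) (I J : Fin n) :
    DifferentiableAt ℝ (fun y => curvS Γ y I J) x := by
  simp only [curvS]
  exact ((hdGd hΓ I J).sub (hdGd hΓ J I)).add
    (DifferentiableAt.mbraD (hGd hΓ I) (hGd hΓ J))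

/- ## Antisymmetry and covariant derivative of a negative -/

lemma curvS_antisym (y : Fin n → ℝ) (P Q : Fin n) :
    curvS Γ y Q P = -(curvS Γ y P Q) := by
  rw [curvS, curvS, mbra_skew (Γ y Q) (Γ y P)]
  abel

lemma covS_neg {om : (Fin n → ℝ) → Mat k} (hom : DifferentiableAt ℝ om x) (i : Fin n) :
    covS Γ (fun y => -(om y)) x i = -(covS Γ om x i) := by
  simp only [covS, pd_neg, mbra_neg_right]
  abel

/- ## Second Bianchi identity -/

lemma bianchi_sum (hΓ : ContDiffAt ℝ ∞ Γ x) (a I J : Fin n) :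
    covS Γ (fun y => curvS Γ y I J) x a + covS Γ (fun y => curvS Γ y J a) x I
      + covS Γ (fun y => curvS Γ y a I) x J = 0 := by
  have expand : ∀ d P Q : Fin n, pd (fun y => curvS Γ y P Q) x d
      = pd (fun y => pd (fun z => Γ z Q) y P) x d - pd (fun y => pd (fun z => Γ z P) y Q) x d
        + (mbra (pd (fun z => Γ z P) x d) (Γ x Q)
            + mbra (Γ x P) (pd (fun z => Γ z Q) x d)) := by
    intro d P Q
    simp only [curvS]
    rw [pd_add ((hdGd hΓ P Q).fun_sub (hdGd hΓ Q P))
        (DifferentiableAt.mbraD (hGd hΓ P) (hGd hΓ Q)) d,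
      pd_sub (hdGd hΓ P Q) (hdGd hΓ Q P) d,
      pd_mbra (hGd hΓ P) (hGd hΓ Q) d]
  simp only [covS]
  rw [expand a I J, expand I J a, expand J a I]
  simp only [curvS]
  rw [pd_pd_symm (hGc hΓ J) a I, pd_pd_symm (hGc hΓ I) a J, pd_pd_symm (hGc hΓ a) J I]
  simp only [mbra, mmul_sub, sub_mmul, mmul_add, add_mmul, mmul_assoc]
  abel

lemma bianchi (hΓ : ContDiffAt ℝ ∞ Γ x) (a I J : Fin n) :
    covS Γ (fun y => curvS Γ y I J) x a
      = -(covS Γ (fun y => curvS Γ y J a) x I) - covS Γ (fun y => curvS Γ y a I) x J := by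
  have h := bianchi_sum hΓ a I J
  linear_combination (norm := abel1) h

/- ## Per-term computations -/

lemma term1 (hΓ : ContDiffAt ℝ ∞ Γ x) (a I J : Fin n) :
    pd (fun y => trMul (curvS Γ y I J) (curvS Γ y I J)) x a
      = 2 * trMul (covS Γ (fun y => curvS Γ y I J) x a) (curvS Γ x I J) := by
  simp only [pd_trMul (hDF hΓ I J) (hDF hΓ I J) a]
  have hc : covS Γ (fun y => curvS Γ y I J) x a
      = pd (fun y => curvS Γ y I J) x a + mbra (Γ x a) (curvS Γ x I J) := by
    simp only [covS]
  rw [hc, trMul_add_left, trMul_mbra_self,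
    trMul_comm (curvS Γ x I J) (pd (fun y => curvS Γ y I J) x a)]
  ring

lemma term2 (hΓ : ContDiffAt ℝ ∞ Γ x) (a I J : Fin n) :
    trMul (covS Γ (fun y => curvS Γ y I J) x a) (curvS Γ x I J)
      = -(trMul (covS Γ (fun y => curvS Γ y a J) x I) (curvS Γ x J I))
        - trMul (covS Γ (fun y => curvS Γ y a I) x J) (curvS Γ x I J) := by
  rw [bianchi hΓ a I J, trMul_sub_left, trMul_neg_left]
  have h1 : trMul (covS Γ (fun y => curvS Γ y J a) x I) (curvS Γ x I J)
      = trMul (covS Γ (fun y => curvS Γ y a J) x I) (curvS Γ x J I) := by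
    have e : (fun y => curvS Γ y J a) = (fun y => -(curvS Γ y a J)) :=
      funext fun y => curvS_antisym y a J
    rw [e, covS_neg (hDF hΓ a J) I, trMul_neg_left,
      show curvS Γ x I J = -(curvS Γ x J I) from curvS_antisym x J I, trMul_neg_right,
      neg_neg]
  rw [h1]

lemma termR (hΓ : ContDiffAt ℝ ∞ Γ x) (a I J : Fin n) :
    trMul (pd (fun y => curvS Γ y I J) x J) (curvS Γ x a I)
      + trMul (curvS Γ x I J) (pd (fun y => curvS Γ y a I) x J)
      + trMul (covS Γ (fun y => curvS Γ y J I) x J) (curvS Γ x a I)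
      = trMul (covS Γ (fun y => curvS Γ y a I) x J) (curvS Γ x I J) := by
  have h1 : covS Γ (fun y => curvS Γ y J I) x J
      = -(pd (fun y => curvS Γ y I J) x J) - mbra (Γ x J) (curvS Γ x I J) := by
    have e : (fun y => curvS Γ y J I) = (fun y => -(curvS Γ y I J)) :=
      funext fun y => curvS_antisym y I J
    rw [e, covS_neg (hDF hΓ I J) J]
    simp only [covS]
    abel
  have h2 : covS Γ (fun y => curvS Γ y a I) x J
      = pd (fun y => curvS Γ y a I) x J + mbra (Γ x J) (curvS Γ x a I) := by
    simp only [covS]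
  rw [h1, h2, trMul_sub_left, trMul_neg_left, trMul_mbra,
    trMul_add_left,
    trMul_comm (pd (fun y => curvS Γ y a I) x J) (curvS Γ x I J),
    trMul_comm (mbra (Γ x J) (curvS Γ x a I)) (curvS Γ x I J)]
  ring

/- ## Scalar double-sum helpers -/

lemma double_sum_helper {m : ℕ} (t b : Fin m → Fin m → ℝ)
    (ht : ∀ I J, t I J = -(b J I) - b I J) :
    ∑ I, ∑ J, 2 * t I J = -4 * ∑ I, ∑ J, b I J := by
  have h : ∑ I, ∑ J, 2 * t I J = ∑ I, ∑ J, ((-2) * b J I - 2 * b I J) := by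
    refine Finset.sum_congr rfl fun I _ => Finset.sum_congr rfl fun J _ => ?_
    rw [ht I J]; ring
  rw [h]
  have e1 : ∑ I : Fin m, ∑ J : Fin m, (-2 : ℝ) * b J I = -2 * ∑ I, ∑ J, b I J := by
    rw [Finset.sum_comm]
    simp [Finset.mul_sum]
  have e2 : ∑ I : Fin m, ∑ J : Fin m, (2 : ℝ) * b I J = 2 * ∑ I, ∑ J, b I J := by
    simp [Finset.mul_sum]
  simp only [Finset.sum_sub_distrib]
  rw [e1, e2]; ring

lemma double_sum_helper2 {m : ℕ} (u r b : Fin m → Fin m → ℝ)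
    (h : ∀ I J, u I J + r I J = b I J) :
    -4 * ∑ J, ∑ I, u I J - 4 * ∑ I, ∑ J, r I J = -4 * ∑ I, ∑ J, b I J := by
  have hs : ∑ J : Fin m, ∑ I : Fin m, u I J = ∑ I, ∑ J, u I J := Finset.sum_comm
  have hb : ∑ I : Fin m, ∑ J : Fin m, b I J = ∑ I, ∑ J, (u I J + r I J) :=
    Finset.sum_congr rfl fun I _ => Finset.sum_congr rfl fun J _ => (h I J).symm
  rw [hs, hb]
  simp only [Finset.sum_add_distrib]
  ring

end Aux

open Aux

/-- Pointwise derivative identity for the curvature density: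
`∂_a(Σ_{I,J} tr(F_{IJ}F_{IJ})) = −4 Σ_J ∂_J(Σ_I tr(F_{IJ}F_{aI})) − 4 Σ_{I,J} tr((∇_JF_{JI})F_{aI})`. -/
theorem curvature_density_derivative_identity
    (n k : ℕ) (hn : 1 ≤ n) (hk : 1 ≤ k) (U : Set (Fin n → ℝ)) (hU : IsOpen U)
    (Γ : (Fin n → ℝ) → Fin n → Mat k) (hsm : ContDiffOn ℝ ∞ Γ U) :
    ∀ x ∈ U, ∀ a : Fin n,
      pd (fun y => ∑ I, ∑ J, trMul (curvS Γ y I J) (curvS Γ y I J)) x a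
        = -4 * ∑ J, pd (fun y => ∑ I, trMul (curvS Γ y I J) (curvS Γ y a I)) x J
          - 4 * ∑ I, ∑ J, trMul (covS Γ (fun y => curvS Γ y J I) x J) (curvS Γ x a I) := by
  intro x hx a
  have hΓ : ContDiffAt ℝ ∞ Γ x := hsm.contDiffAt (hU.mem_nhds hx)
  have hF : ∀ I J : Fin n, DifferentiableAt ℝ (fun y => curvS Γ y I J) x :=
    fun I J => hDF hΓ I J
  -- Step 1: expand the left-hand side.
  have hL : pd (fun y => ∑ I, ∑ J, trMul (curvS Γ y I J) (curvS Γ y I J)) x a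
      = ∑ I, ∑ J, 2 * trMul (covS Γ (fun y => curvS Γ y I J) x a) (curvS Γ x I J) := by
    rw [pd_sum (f := fun I y => ∑ J, trMul (curvS Γ y I J) (curvS Γ y I J)) Finset.univ
      (fun I _ => DifferentiableAt.fun_sum fun J _ =>
        DifferentiableAt.trMulD (hF I J) (hF I J)) a]
    refine Finset.sum_congr rfl fun I _ => ?_
    rw [pd_sum (f := fun J y => trMul (curvS Γ y I J) (curvS Γ y I J)) Finset.univ
      (fun J _ => DifferentiableAt.trMulD (hF I J) (hF I J)) a]
    exact Finset.sum_congr rfl fun J _ => term1 hΓ a I J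
  rw [hL]
  -- Step 2: expand the first sum on the right-hand side.
  have hR1 : ∀ J : Fin n, pd (fun y => ∑ I, trMul (curvS Γ y I J) (curvS Γ y a I)) x J
      = ∑ I, (trMul (pd (fun y => curvS Γ y I J) x J) (curvS Γ x a I)
          + trMul (curvS Γ x I J) (pd (fun y => curvS Γ y a I) x J)) := by
    intro J
    rw [pd_sum (f := fun I y => trMul (curvS Γ y I J) (curvS Γ y a I)) Finset.univ
      (fun I _ => DifferentiableAt.trMulD (hF I J) (hF a I)) J]
    refine Finset.sum_congr rfl fun I _ => ?_
    simp only [pd_trMul (hF I J) (hF a I) J]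
  rw [Finset.sum_congr rfl fun J _ => hR1 J]
  -- Step 3: combine using the Bianchi identity and trace identities.
  have h1 := double_sum_helper
    (fun I J => trMul (covS Γ (fun y => curvS Γ y I J) x a) (curvS Γ x I J))
    (fun I J => trMul (covS Γ (fun y => curvS Γ y a I) x J) (curvS Γ x I J))
    (fun I J => term2 hΓ a I J)
  have h2 := double_sum_helper2
    (fun I J => trMul (pd (fun y => curvS Γ y I J) x J) (curvS Γ x a I)
      + trMul (curvS Γ x I J) (pd (fun y => curvS Γ y a I) x J))
    (fun I J => trMul (covS Γ (fun y => curvS Γ y J I) x J) (curvS Γ x a I))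
    (fun I J => trMul (covS Γ (fun y => curvS Γ y a I) x J) (curvS Γ x I J))
    (fun I J => termR hΓ a I J)
  rw [h1, ← h2]

end
end
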